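/- arXiv:1601.06650 — 9 statements merged into one kernel-verified Lean document; each statement's English description precedes it below -/
import Mathlib

section
/- Let N ≥ 1 be an integer, ε ∈ [0,1], let K be an N×N real matrix with all entries in [0,1], and let D_N be the N×N matrix with entries (D_N)_{ij} = (1−ε)^{|i−j|/2}. Then ‖K ∘ D_N − K‖_F² ≤ (1/6)·N²(N²−1)·ε², and in particular ‖K ∘ D_N − K‖_F² ≤ N⁴ε². -/
open scoped BigOperators Matrix

lemma aux_key (ε : ℝ) (hε0 : 0 ≤ ε) (hε1 : ε ≤ 1) (m : ℕ) :
    (1 - (1 - ε) ^ ((m : ℝ) / 2)) ^ 2 ≤ (m : ℝ) ^ 2 * ε ^ 2 := by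
  have h0 : (0 : ℝ) ≤ 1 - ε := by linarith
  have hm0 : (0 : ℝ) ≤ (m : ℝ) := Nat.cast_nonneg m
  have hD1 : (1 - ε) ^ ((m : ℝ) / 2) ≤ 1 :=
    Real.rpow_le_one h0 (by linarith) (by positivity)
  have hD0 : 0 ≤ (1 - ε) ^ ((m : ℝ) / 2) := Real.rpow_nonneg h0 _
  have hub : 1 - (1 - ε) ^ ((m : ℝ) / 2) ≤ (m : ℝ) * ε := by
    rcases eq_or_lt_of_le hε1 with h1 | h1
    · rcases Nat.eq_zero_or_pos m with hm | hm
      · subst hm; simp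
      · have : (1 : ℝ) ≤ (m : ℝ) := by exact_mod_cast hm
        nlinarith
    · have hpos : (0 : ℝ) < 1 - ε := by linarith
      have h2 : (1 - ε) ^ ((m : ℝ)) ≤ (1 - ε) ^ ((m : ℝ) / 2) :=
        Real.rpow_le_rpow_of_exponent_ge hpos (by linarith) (by linarith)
      rw [Real.rpow_natCast] at h2
      have h3 : (1 : ℝ) + (m : ℝ) * (-ε) ≤ (1 + (-ε)) ^ m :=
        one_add_mul_le_pow (by linarith) m
      have h4 : (1 : ℝ) - (m : ℝ) * ε ≤ (1 - ε) ^ m := by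
        have : (1 : ℝ) + (-ε) = 1 - ε := by ring
        rw [this] at h3; linarith
      linarith
  nlinarith [mul_nonneg hm0 hε0]

lemma aux_sum_id (N : ℕ) :
    ∑ i ∈ Finset.range N, (i : ℝ) = (N : ℝ) * ((N : ℝ) - 1) / 2 := by
  induction N with
  | zero => simp
  | succ n ih => rw [Finset.sum_range_succ, ih]; push_cast; ring

lemma aux_sum_sq (N : ℕ) :
    ∑ i ∈ Finset.range N, (i : ℝ) ^ 2
      = (N : ℝ) * ((N : ℝ) - 1) * (2 * (N : ℝ) - 1) / 6 := by
  induction N with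
  | zero => simp
  | succ n ih => rw [Finset.sum_range_succ, ih]; push_cast; ring

lemma aux_sum_diff_sq (N : ℕ) :
    ∑ i : Fin N, ∑ j : Fin N, ((i : ℝ) - (j : ℝ)) ^ 2
      = (N : ℝ) ^ 2 * ((N : ℝ) ^ 2 - 1) / 6 := by
  have inner : ∀ x : ℝ, ∑ j : Fin N, (x - (j : ℝ)) ^ 2
      = (N : ℝ) * x ^ 2 - 2 * x * ((N : ℝ) * ((N : ℝ) - 1) / 2)
        + (N : ℝ) * ((N : ℝ) - 1) * (2 * (N : ℝ) - 1) / 6 := by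
    intro x
    have e1 : ∑ j : Fin N, (x - (j : ℝ)) ^ 2
        = ∑ j ∈ Finset.range N, (x - (j : ℝ)) ^ 2 :=
      Fin.sum_univ_eq_sum_range (fun j => (x - (j : ℝ)) ^ 2) N
    have e2 : ∑ j ∈ Finset.range N, (x - (j : ℝ)) ^ 2
        = ∑ j ∈ Finset.range N, (x ^ 2 - 2 * x * (j : ℝ) + (j : ℝ) ^ 2) := by
      apply Finset.sum_congr rfl; intros; ring
    rw [e1, e2, Finset.sum_add_distrib, Finset.sum_sub_distrib, ← Finset.mul_sum,
      aux_sum_id, aux_sum_sq, Finset.sum_const, Finset.card_range]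
    (try simp only [nsmul_eq_mul]); try ring
  have e3 : ∑ i : Fin N, ∑ j : Fin N, ((i : ℝ) - (j : ℝ)) ^ 2
      = ∑ i ∈ Finset.range N, ((N : ℝ) * (i : ℝ) ^ 2
          - 2 * (i : ℝ) * ((N : ℝ) * ((N : ℝ) - 1) / 2)
          + (N : ℝ) * ((N : ℝ) - 1) * (2 * (N : ℝ) - 1) / 6) := by
    rw [← Fin.sum_univ_eq_sum_range]
    exact Finset.sum_congr rfl fun i _ => inner _
  rw [e3, Finset.sum_add_distrib, Finset.sum_sub_distrib, ← Finset.sum_mul,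
    ← Finset.mul_sum, ← Finset.mul_sum, aux_sum_id, aux_sum_sq, Finset.sum_const,
    Finset.card_range]
  (try simp only [nsmul_eq_mul]); try ring

/-- Frobenius-norm-squared bound on the deviation of `K ∘ D_N` from `K`, where
`D_N` has entries `(1-ε)^(|i-j|/2)` and the entries of `K` lie in `[0,1]`. -/
theorem frobenius_sq_hadamard_discount_sub_le
    (N : ℕ) (hN : 1 ≤ N) (ε : ℝ) (hε0 : 0 ≤ ε) (hε1 : ε ≤ 1)
    (K : Matrix (Fin N) (Fin N) ℝ)
    (hK : ∀ i j, K i j ∈ Set.Icc (0 : ℝ) 1)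
    (D : Matrix (Fin N) (Fin N) ℝ)
    (hD : ∀ i j, D i j = (1 - ε) ^ ((|(i : ℝ) - (j : ℝ)|) / 2)) :
    (∑ i, ∑ j, (K i j * D i j - K i j) ^ 2) ≤ (1 / 6) * N ^ 2 * (N ^ 2 - 1) * ε ^ 2
      ∧ (∑ i, ∑ j, (K i j * D i j - K i j) ^ 2) ≤ N ^ 4 * ε ^ 2 := by
  have hNR : (1 : ℝ) ≤ (N : ℝ) := by exact_mod_cast hN
  have main : (∑ i, ∑ j, (K i j * D i j - K i j) ^ 2)
      ≤ (1 / 6) * (N : ℝ) ^ 2 * ((N : ℝ) ^ 2 - 1) * ε ^ 2 := by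
    have step : (∑ i, ∑ j, (K i j * D i j - K i j) ^ 2)
        ≤ ∑ i : Fin N, ∑ j : Fin N, ((i : ℝ) - (j : ℝ)) ^ 2 * ε ^ 2 := by
      apply Finset.sum_le_sum; intro i _
      apply Finset.sum_le_sum; intro j _
      set m : ℕ := ((i : ℤ) - (j : ℤ)).natAbs with hmdef
      have hm : ((m : ℝ)) = |(i : ℝ) - (j : ℝ)| := by
        rw [hmdef, Nat.cast_natAbs]; push_cast; ring_nf
      have hDij : D i j = (1 - ε) ^ ((m : ℝ) / 2) := by
        rw [hD, hm]
      obtain ⟨k0, k1⟩ := hK i j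
      have hkey := aux_key ε hε0 hε1 m
      rw [← hDij] at hkey
      have hmsq : (m : ℝ) ^ 2 = ((i : ℝ) - (j : ℝ)) ^ 2 := by
        rw [hm, sq_abs]
      rw [hmsq] at hkey
      have e : (K i j * D i j - K i j) ^ 2
          = (K i j) ^ 2 * (1 - D i j) ^ 2 := by ring
      rw [e]
      calc (K i j) ^ 2 * (1 - D i j) ^ 2
          ≤ 1 * (1 - D i j) ^ 2 :=
            mul_le_mul_of_nonneg_right (by nlinarith) (sq_nonneg _)
        _ = (1 - D i j) ^ 2 := one_mul _
        _ ≤ ((i : ℝ) - (j : ℝ)) ^ 2 * ε ^ 2 := hkey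
    have eq2 : ∑ i : Fin N, ∑ j : Fin N, ((i : ℝ) - (j : ℝ)) ^ 2 * ε ^ 2
        = ((N : ℝ) ^ 2 * ((N : ℝ) ^ 2 - 1) / 6) * ε ^ 2 := by
      have h : ∀ i : Fin N, ∑ j : Fin N, ((i : ℝ) - (j : ℝ)) ^ 2 * ε ^ 2
          = (∑ j : Fin N, ((i : ℝ) - (j : ℝ)) ^ 2) * ε ^ 2 :=
        fun i => (Finset.sum_mul _ _ _).symm
      rw [Finset.sum_congr rfl fun i _ => h i, ← Finset.sum_mul, aux_sum_diff_sq]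
    rw [eq2] at step
    linarith
  refine ⟨main, ?_⟩
  have h2 : (1 / 6 : ℝ) * (N : ℝ) ^ 2 * ((N : ℝ) ^ 2 - 1) * ε ^ 2
      ≤ (N : ℝ) ^ 4 * ε ^ 2 := by
    nlinarith [mul_nonneg (mul_nonneg (sq_nonneg ((N : ℝ))) (sq_nonneg ((N : ℝ)))) (sq_nonneg ε),
      mul_nonneg (sq_nonneg ((N : ℝ))) (sq_nonneg ε)]
  linarith
end

section
/- Let A and B be N×N real symmetric positive semidefinite matrices. Then log det(I_N + B) ≤ log det(I_N + A) + N·log(1 + ‖B − A‖_F), and consequently log det(I_N + B) ≤ log det(I_N + A) + N·‖B − A‖_F. -/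
open scoped BigOperators Matrix

open Matrix in
/-- Each eigenvalue argument: `1 ≤ det (1 + T)` for real PSD `T`. -/
lemma one_le_det_one_add_aux {n : Type*} [Fintype n] [DecidableEq n]
    {T : Matrix n n ℝ} (hT : T.PosSemidef) : 1 ≤ (1 + T).det := by
  have h1 : (1 + T).PosSemidef := Matrix.PosSemidef.one.add hT
  have hH := h1.isHermitian
  have hd : (1 + T).det = ∏ i, hH.eigenvalues i := by
    simpa using hH.det_eq_prod_eigenvalues
  rw [hd]
  have key : ∀ i, 1 ≤ hH.eigenvalues i := by
    intro i
    rw [hH.eigenvalues_eq]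
    set v : n → ℝ := ⇑(hH.eigenvectorBasis i) with hv
    have hvv : v ⬝ᵥ v = 1 := by
      have h := hH.eigenvectorBasis.orthonormal.1 i
      have : @inner ℝ _ _ (hH.eigenvectorBasis i) (hH.eigenvectorBasis i) = 1 := by
        rw [real_inner_self_eq_norm_sq, h]; norm_num
      exact this
    have hTv : 0 ≤ v ⬝ᵥ T *ᵥ v := by simpa using hT.dotProduct_mulVec_nonneg v
    have : (star v) ⬝ᵥ ((1 + T) *ᵥ v) = 1 + v ⬝ᵥ T *ᵥ v := by
      simp [Matrix.add_mulVec, Matrix.one_mulVec, dotProduct_add, hvv]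
    rw [this]
    simpa using by linarith
  calc (1:ℝ) = ∏ _i : n, 1 := by simp
    _ ≤ ∏ i, hH.eigenvalues i :=
        Finset.prod_le_prod (by simp) (fun i _ => key i)

open Matrix in
/-- Loewner monotonicity of the determinant at a positive-definite base point. -/
lemma det_le_det_add_aux {n : Type*} [Fintype n] [DecidableEq n]
    {P S : Matrix n n ℝ} (hP : P.PosSemidef) (hPd : 0 < P.det)
    (hS : S.PosSemidef) : P.det ≤ (P + S).det := by
  set C := (open scoped MatrixOrder in CFC.sqrt P) with hCdef
  have hC : C.PosSemidef := by open scoped MatrixOrder in exact (CFC.sqrt_nonneg P).posSemidef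
  have hCC : C * C = P := by open scoped MatrixOrder in exact CFC.sqrt_mul_sqrt_self P hP.nonneg
  have hdetC : C.det * C.det = P.det := by rw [← Matrix.det_mul, hCC]
  have hCd : IsUnit C.det := by
    refine isUnit_iff_ne_zero.2 fun h => ?_
    rw [h, mul_zero] at hdetC
    exact hPd.ne' hdetC.symm
  have hCinv : (C⁻¹)ᴴ = C⁻¹ := by
    rw [Matrix.conjTranspose_nonsing_inv, hC.isHermitian.eq]
  have hT : (C⁻¹ * S * C⁻¹).PosSemidef := by
    have := hS.mul_mul_conjTranspose_same C⁻¹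
    rwa [hCinv] at this
  have key : P + S = C * (1 + C⁻¹ * S * C⁻¹) * C := by
    rw [mul_add, add_mul, mul_one, hCC]
    congr 1
    symm
    calc C * (C⁻¹ * S * C⁻¹) * C = (C * C⁻¹) * S * (C⁻¹ * C) := by
          simp only [Matrix.mul_assoc]
      _ = S := by rw [Matrix.mul_nonsing_inv _ hCd, Matrix.nonsing_inv_mul _ hCd,
          Matrix.one_mul, Matrix.mul_one]
  have hdet1 : 1 ≤ (1 + C⁻¹ * S * C⁻¹).det := one_le_det_one_add_aux hT
  calc P.det = C.det * 1 * C.det := by rw [mul_one]; exact hdetC.symm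
    _ ≤ C.det * (1 + C⁻¹ * S * C⁻¹).det * C.det := by
        have hCnn : 0 ≤ C.det := by
          rw [hC.isHermitian.det_eq_prod_eigenvalues]
          exact Finset.prod_nonneg fun i _ => by
            simpa using hC.eigenvalues_nonneg i
        have h0 : 0 < C.det := lt_of_le_of_ne hCnn (by
          intro h; rw [← h, mul_zero] at hdetC; exact hPd.ne' hdetC.symm)
        nlinarith
    _ = (P + S).det := by rw [key, Matrix.det_mul, Matrix.det_mul]

/-- Mirsky-type log-det perturbation bound: for real symmetric PSD matrices `A, B`,
`log det(I + B) ≤ log det(I + A) + N·log(1 + ‖B - A‖_F) ≤ log det(I + A) + N·‖B - A‖_F`. -/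
theorem log_det_one_add_le_of_frobenius
    (N : ℕ) (A B : Matrix (Fin N) (Fin N) ℝ)
    (hA_symm : A.IsSymm) (hA_psd : ∀ x : Fin N → ℝ, 0 ≤ x ⬝ᵥ A.mulVec x)
    (hB_symm : B.IsSymm) (hB_psd : ∀ x : Fin N → ℝ, 0 ≤ x ⬝ᵥ B.mulVec x) :
    Real.log (1 + B).det ≤
        Real.log (1 + A).det
          + N * Real.log (1 + Real.sqrt (∑ i, ∑ j, (B i j - A i j) ^ 2))
      ∧ Real.log (1 + B).det ≤
        Real.log (1 + A).det + N * Real.sqrt (∑ i, ∑ j, (B i j - A i j) ^ 2) := by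
  set r : ℝ := Real.sqrt (∑ i, ∑ j, (B i j - A i j) ^ 2) with hr
  have hr0 : 0 ≤ r := Real.sqrt_nonneg _
  have hA' : A.PosSemidef := by
    refine Matrix.PosSemidef.of_dotProduct_mulVec_nonneg ?_ fun x => by simpa using hA_psd x
    rw [Matrix.IsHermitian, Matrix.conjTranspose_eq_transpose_of_trivial]
    exact hA_symm
  have hB' : B.PosSemidef := by
    refine Matrix.PosSemidef.of_dotProduct_mulVec_nonneg ?_ fun x => by simpa using hB_psd x
    rw [Matrix.IsHermitian, Matrix.conjTranspose_eq_transpose_of_trivial]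
    exact hB_symm
  -- Cauchy–Schwarz: the quadratic form of B - A is bounded by r * ‖x‖²
  have hCS : ∀ x : Fin N → ℝ,
      x ⬝ᵥ B.mulVec x - x ⬝ᵥ A.mulVec x ≤ r * (x ⬝ᵥ x) := by
    intro x
    have hrw : x ⬝ᵥ B.mulVec x - x ⬝ᵥ A.mulVec x
        = ∑ p : Fin N × Fin N, (B p.1 p.2 - A p.1 p.2) * (x p.1 * x p.2) := by
      rw [Fintype.sum_prod_type]
      simp only [dotProduct, Matrix.mulVec, Finset.mul_sum,
        ← Finset.sum_sub_distrib]
      exact Finset.sum_congr rfl fun i _ => Finset.sum_congr rfl fun j _ => by ring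
    have hcs := Finset.sum_mul_sq_le_sq_mul_sq Finset.univ
      (fun p : Fin N × Fin N => B p.1 p.2 - A p.1 p.2)
      (fun p : Fin N × Fin N => x p.1 * x p.2)
    have hg : (∑ p : Fin N × Fin N, (x p.1 * x p.2) ^ 2) = (x ⬝ᵥ x) ^ 2 := by
      rw [Fintype.sum_prod_type, dotProduct, sq, Finset.sum_mul_sum]
      exact Finset.sum_congr rfl fun i _ => Finset.sum_congr rfl fun j _ => by ring
    have hf : (∑ p : Fin N × Fin N, (B p.1 p.2 - A p.1 p.2) ^ 2)
        = ∑ i, ∑ j, (B i j - A i j) ^ 2 := by rw [Fintype.sum_prod_type]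
    have hxx : 0 ≤ x ⬝ᵥ x := by
      simpa [dotProduct, sq] using Finset.sum_nonneg
        (fun i (_ : i ∈ Finset.univ) => mul_self_nonneg (x i))
    rw [hrw]
    have h1 : (∑ p : Fin N × Fin N, (B p.1 p.2 - A p.1 p.2) * (x p.1 * x p.2))
        ≤ Real.sqrt ((∑ i, ∑ j, (B i j - A i j) ^ 2) * (x ⬝ᵥ x) ^ 2) := by
      rw [hf, hg] at hcs
      calc _ ≤ |∑ p : Fin N × Fin N, (B p.1 p.2 - A p.1 p.2) * (x p.1 * x p.2)| :=
            le_abs_self _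
        _ = Real.sqrt ((∑ p : Fin N × Fin N,
              (B p.1 p.2 - A p.1 p.2) * (x p.1 * x p.2)) ^ 2) :=
            (Real.sqrt_sq_eq_abs _).symm
        _ ≤ _ := Real.sqrt_le_sqrt hcs
    calc _ ≤ Real.sqrt ((∑ i, ∑ j, (B i j - A i j) ^ 2) * (x ⬝ᵥ x) ^ 2) := h1
      _ = r * (x ⬝ᵥ x) := by
          rw [Real.sqrt_mul (Finset.sum_nonneg fun i _ =>
            Finset.sum_nonneg fun j _ => sq_nonneg _), Real.sqrt_sq hxx, hr]
  -- the slack matrix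
  set S : Matrix (Fin N) (Fin N) ℝ := (1 + r) • (1 + A) - (1 + B) with hS
  have hS' : S.PosSemidef := by
    refine Matrix.PosSemidef.of_dotProduct_mulVec_nonneg ?_ ?_
    · rw [Matrix.IsHermitian, Matrix.conjTranspose_eq_transpose_of_trivial]
      rw [hS]
      simp [Matrix.transpose_smul, Matrix.transpose_sub, Matrix.transpose_add,
        hA_symm.eq, hB_symm.eq]
    · intro x
      have hform : (star x) ⬝ᵥ S.mulVec x
          = (1 + r) * (x ⬝ᵥ x + x ⬝ᵥ A.mulVec x) - (x ⬝ᵥ x + x ⬝ᵥ B.mulVec x) := by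
        simp [hS, Matrix.sub_mulVec, Matrix.add_mulVec, Matrix.one_mulVec,
          Matrix.smul_mulVec, dotProduct_sub, dotProduct_add,
          dotProduct_smul, smul_eq_mul, mul_add]
      rw [hform]
      have h1 := hCS x
      have h2 := hA_psd x
      have hxx : 0 ≤ x ⬝ᵥ x := by
        simpa [dotProduct, sq] using Finset.sum_nonneg
          (fun i (_ : i ∈ Finset.univ) => mul_self_nonneg (x i))
      nlinarith
  have h1B : (1 + B).PosSemidef := Matrix.PosSemidef.one.add hB'
  have hdet1B : (1 : ℝ) ≤ (1 + B).det := one_le_det_one_add_aux hB'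
  have hdet1A : (1 : ℝ) ≤ (1 + A).det := one_le_det_one_add_aux hA'
  have hmono := det_le_det_add_aux h1B (lt_of_lt_of_le one_pos hdet1B) hS'
  have hsum : (1 + B) + S = (1 + r) • (1 + A) := by rw [hS]; abel
  rw [hsum, Matrix.det_smul] at hmono
  simp only [Fintype.card_fin] at hmono
  -- hmono : (1 + B).det ≤ (1 + r) ^ N * (1 + A).det
  have hpos1r : (0 : ℝ) < 1 + r := by linarith
  have hlog1 : Real.log (1 + B).det ≤
      Real.log (1 + A).det + N * Real.log (1 + r) := by
    calc Real.log (1 + B).det ≤ Real.log ((1 + r) ^ N * (1 + A).det) :=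
          Real.log_le_log (lt_of_lt_of_le one_pos hdet1B) hmono
      _ = N * Real.log (1 + r) + Real.log (1 + A).det := by
          rw [Real.log_mul (by positivity) (by positivity), Real.log_pow]
      _ = _ := by ring
  refine ⟨hlog1, hlog1.trans ?_⟩
  have : Real.log (1 + r) ≤ r := by
    have := Real.log_le_sub_one_of_pos hpos1r
    linarith
  have hN : (0 : ℝ) ≤ N := Nat.cast_nonneg N
  nlinarith
end

section
/- Let K be a T×T real symmetric positive semidefinite matrix and σ > 0. Define s_1 = K_{11}, and for 2 ≤ t ≤ T define s_t = K_{tt} − kᵀ(K^{(t−1)} + σ²I_{t−1})⁻¹k, where K^{(t−1)} is the leading (t−1)×(t−1) principal submatrix of K and k = (K_{1t}, …, K_{(t−1)t})ᵀ. Then log det(I_T + σ⁻²K) = ∑_{t=1}^T log(1 + σ⁻² s_t). -/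
open scoped Matrix BigOperators

/-- Telescoping identity expressing `log det(I + σ⁻²K)` as a sum of logs of
`1 + σ⁻²·(posterior variance)`, where `s t` is the Schur-complement-type quantity
`K_{tt} - kᵀ(K^{(t-1)} + σ²I)⁻¹k` built from the leading principal submatrix. -/
theorem log_det_eq_sum_log_posterior_var
    (T : ℕ) (σ : ℝ) (hσ : 0 < σ)
    (K : Matrix (Fin T) (Fin T) ℝ)
    (h_symm : K.IsSymm) (h_psd : ∀ x : Fin T → ℝ, 0 ≤ x ⬝ᵥ K.mulVec x)
    (s : Fin T → ℝ)
    (hs : ∀ t : Fin T,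
      s t = K t t -
        (fun i : Fin t.val => K (Fin.castLE t.isLt.le i) t) ⬝ᵥ
          ((K.submatrix (Fin.castLE t.isLt.le) (Fin.castLE t.isLt.le)
              + σ ^ 2 • (1 : Matrix (Fin t.val) (Fin t.val) ℝ))⁻¹.mulVec
            (fun i : Fin t.val => K (Fin.castLE t.isLt.le i) t))) :
    Real.log (1 + (σ ^ 2)⁻¹ • K).det = ∑ t : Fin T, Real.log (1 + (σ ^ 2)⁻¹ * s t) := by
  have hσ2 : (0:ℝ) < σ ^ 2 := by positivity
  set A : Matrix (Fin T) (Fin T) ℝ := K + σ ^ 2 • 1 with hAdef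
  have hK : K.PosSemidef := Matrix.posSemidef_iff_dotProduct_mulVec.mpr ⟨h_symm, fun x => by simpa using h_psd x⟩
  -- submatrix of A decomposes
  have hsub : ∀ (n : ℕ) (h : n ≤ T),
      A.submatrix (Fin.castLE h) (Fin.castLE h)
        = K.submatrix (Fin.castLE h) (Fin.castLE h)
          + σ ^ 2 • (1 : Matrix (Fin n) (Fin n) ℝ) := by
    intro n h
    have h1 : ((1 : Matrix (Fin T) (Fin T) ℝ)).submatrix (Fin.castLE h) (Fin.castLE h)
        = (1 : Matrix (Fin n) (Fin n) ℝ) :=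
      Matrix.submatrix_one_embedding ⟨_, Fin.castLE_injective h⟩
    ext i j
    simp [hAdef, Matrix.submatrix_apply, Matrix.one_apply, Fin.castLE_injective h |>.eq_iff]
  -- leading principal submatrices of A are positive definite
  have hpd : ∀ (n : ℕ) (h : n ≤ T),
      (A.submatrix (Fin.castLE h) (Fin.castLE h)).PosDef := by
    intro n h
    rw [hsub n h]
    refine Matrix.posDef_iff_dotProduct_mulVec.mpr ⟨?_, ?_⟩
    · have h1 := (hK.submatrix (Fin.castLE h)).isHermitian
      simp only [Matrix.IsHermitian] at h1 ⊢
      rw [Matrix.conjTranspose_add, h1, Matrix.conjTranspose_smul]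
      simp
    · intro x hx
      have h1 : 0 ≤ star x ⬝ᵥ (K.submatrix (Fin.castLE h) (Fin.castLE h)).mulVec x :=
        (hK.submatrix _).dotProduct_mulVec_nonneg x
      have h2 : 0 < x ⬝ᵥ x := by
        have hne : x ⬝ᵥ x ≠ 0 := fun hc => hx (by simpa using (dotProduct_self_eq_zero).mp hc)
        have hnn : 0 ≤ x ⬝ᵥ x := Finset.sum_nonneg fun i _ => mul_self_nonneg _
        exact lt_of_le_of_ne hnn (Ne.symm hne)
      have hstar : (star x : Fin n → ℝ) = x := by
        funext i; simp
      rw [hstar] at h1 ⊢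
      rw [Matrix.add_mulVec, dotProduct_add, Matrix.smul_mulVec,
        Matrix.one_mulVec, dotProduct_smul, smul_eq_mul]
      have : 0 < σ ^ 2 * (x ⬝ᵥ x) := mul_pos hσ2 h2
      linarith
  -- the key Schur complement determinant step
  have key : ∀ t : Fin T,
      (A.submatrix (Fin.castLE (t.isLt : t.val + 1 ≤ T))
        (Fin.castLE (t.isLt : t.val + 1 ≤ T))).det
      = (A.submatrix (Fin.castLE t.isLt.le) (Fin.castLE t.isLt.le)).det * (σ ^ 2 + s t) := by
    intro t
    set n := t.val with hn
    have hnle : n ≤ T := t.isLt.le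
    have h1 : n + 1 ≤ T := t.isLt
    set An := A.submatrix (Fin.castLE hnle) (Fin.castLE hnle) with hAn
    set k : Fin n → ℝ := fun i => A (Fin.castLE hnle i) t with hk
    have hBlock : (A.submatrix (Fin.castLE h1) (Fin.castLE h1)).submatrix
          finSumFinEquiv finSumFinEquiv
        = Matrix.fromBlocks An
            (Matrix.of fun i (_ : Fin 1) => A (Fin.castLE hnle i) t)
            (Matrix.of fun (_ : Fin 1) j => A t (Fin.castLE hnle j))
            (Matrix.of fun (_ _ : Fin 1) => A t t) := by
      ext i j
      have ht : t = Fin.castLE h1 (finSumFinEquiv (Sum.inr (0 : Fin 1))) := by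
        apply Fin.ext; simp [finSumFinEquiv, hn]
      rcases i with i | i <;> rcases j with j | j <;>
        simp only [Matrix.submatrix_apply, Matrix.fromBlocks_apply₁₁,
          Matrix.fromBlocks_apply₁₂, Matrix.fromBlocks_apply₂₁, Matrix.fromBlocks_apply₂₂,
          Matrix.of_apply, hAn] <;>
        congr 1 <;> apply Fin.ext <;>
        simp only [Fin.coe_castLE, finSumFinEquiv_apply_left, finSumFinEquiv_apply_right,
          Fin.coe_castAdd, Fin.coe_natAdd, Fin.val_eq_zero] <;>
        omega
    have hInv : Invertible An :=
      An.invertibleOfIsUnitDet (isUnit_iff_ne_zero.mpr (hpd n hnle).det_pos.ne')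
    have hdet1 : (A.submatrix (Fin.castLE h1) (Fin.castLE h1)).det
        = An.det * (A t t - k ⬝ᵥ An⁻¹.mulVec k) := by
      rw [← Matrix.det_submatrix_equiv_self finSumFinEquiv, hBlock,
        Matrix.det_fromBlocks₁₁, Matrix.invOf_eq_nonsing_inv]
      have hAsymm : ∀ a b : Fin T, A a b = A b a := by
        intro a b
        simp only [hAdef, Matrix.add_apply, Matrix.smul_apply, Matrix.one_apply]
        rw [h_symm.apply a b]
        by_cases hab : a = b
        · simp [hab]
        · simp [hab, (Ne.symm hab : b ≠ a)]
      congr 1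
      rw [Matrix.det_fin_one]
      simp only [Matrix.sub_apply, Matrix.of_apply, Matrix.mul_apply, Matrix.mulVec,
        dotProduct, Finset.univ_unique, Finset.sum_singleton]
      congr 1
      simp only [Finset.sum_mul, Finset.mul_sum]
      rw [Finset.sum_comm]
      apply Finset.sum_congr rfl
      intro i _
      apply Finset.sum_congr rfl
      intro j _
      rw [hAsymm t (Fin.castLE hnle i)]
      show A (Fin.castLE hnle i) t * An⁻¹ i j * A (Fin.castLE hnle j) t
        = k i * (An⁻¹ i j * k j)
      rw [hk]; ring
    have hAtt : A t t = K t t + σ ^ 2 := by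
      simp [hAdef, Matrix.one_apply]
    have hkK : k = fun i : Fin n => K (Fin.castLE hnle i) t := by
      funext i
      have hne : (Fin.castLE hnle i : Fin T) ≠ t := by
        intro hc
        have := congrArg Fin.val hc
        simp [hn] at this
        omega
      simp [hk, hAdef, Matrix.one_apply, hne]
    have hAninv : An = K.submatrix (Fin.castLE t.isLt.le) (Fin.castLE t.isLt.le)
        + σ ^ 2 • (1 : Matrix (Fin t.val) (Fin t.val) ℝ) := hsub n hnle
    rw [hdet1, hs t]
    congr 1
    rw [hAtt, hkK, hAninv]
    ring
  -- positivity of σ² + s t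
  have hpos : ∀ t : Fin T, 0 < σ ^ 2 + s t := by
    intro t
    have d1 := (hpd (t.val + 1) t.isLt).det_pos
    have d0 := (hpd t.val t.isLt.le).det_pos
    rw [key t] at d1
    nlinarith
  -- telescoping product formula
  have hdet : ∀ (n : ℕ) (h : n ≤ T),
      (A.submatrix (Fin.castLE h) (Fin.castLE h)).det
        = ∏ i : Fin n, (σ ^ 2 + s (Fin.castLE h i)) := by
    intro n
    induction n with
    | zero => intro h; simp
    | succ m ih =>
      intro h
      have hm : m ≤ T := (Nat.le_succ m).trans h
      have ht : m < T := h
      have hkey := key ⟨m, ht⟩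
      rw [hkey, ih hm, Fin.prod_univ_castSucc]
      have e1 : ∀ i : Fin m, Fin.castLE h i.castSucc = Fin.castLE hm i :=
        fun i => Fin.ext (by simp)
      have e2 : Fin.castLE h (Fin.last m) = (⟨m, ht⟩ : Fin T) := Fin.ext (by simp)
      simp only [e1, e2]
  -- determinant of A itself
  have hAid : A.submatrix (Fin.castLE (le_refl T)) (Fin.castLE (le_refl T)) = A := by
    ext i j; simp [Matrix.submatrix_apply]
  have hAdet : A.det = ∏ i : Fin T, (σ ^ 2 + s i) := by
    have := hdet T le_rfl
    rw [hAid] at this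
    rw [this]
    apply Finset.prod_congr rfl
    intro i _
    congr 1
  -- final assembly
  have hM : (1 + (σ ^ 2)⁻¹ • K : Matrix (Fin T) (Fin T) ℝ) = (σ ^ 2)⁻¹ • A := by
    rw [hAdef, smul_add, smul_smul, inv_mul_cancel₀ hσ2.ne', one_smul, add_comm]
  rw [hM, Matrix.det_smul, hAdet]
  have hprod : (σ ^ 2)⁻¹ ^ (Fintype.card (Fin T)) * ∏ i : Fin T, (σ ^ 2 + s i)
      = ∏ i : Fin T, (1 + (σ ^ 2)⁻¹ * s i) := by
    rw [← Finset.card_univ, ← Finset.prod_const, ← Finset.prod_mul_distrib]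
    apply Finset.prod_congr rfl
    intro i _
    field_simp
  rw [hprod, Real.log_prod]
  · intro i _
    have : (0:ℝ) < 1 + (σ ^ 2)⁻¹ * s i := by
      have := hpos i
      have h2 : (0:ℝ) < (σ ^ 2)⁻¹ * (σ ^ 2 + s i) := mul_pos (by positivity) this
      calc (0:ℝ) < (σ ^ 2)⁻¹ * (σ ^ 2 + s i) := h2
        _ = 1 + (σ ^ 2)⁻¹ * s i := by field_simp
    exact this.ne'
end

section
/- Let N ≥ 1 be an integer, ε ∈ [0,1], and σ > 0. Let K and K̃ be N×N real symmetric positive semidefinite matrices with ‖K̃ − K‖₂ ≤ N²ε, and let k, k̃ ∈ ℝ^N satisfy ‖k‖₂² ≤ N, ‖k̃‖₂² ≤ N, and ‖k̃ − k‖₂² ≤ N³ε². Then |k̃ᵀ(K̃ + σ²I_N)⁻¹k̃ − kᵀ(K + σ²I_N)⁻¹k| ≤ (3σ⁻² + σ⁻⁴)·N³ε. -/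
open scoped Matrix BigOperators

/-- The spectral norm (ℓ²→ℓ² operator norm) of a real square matrix. -/
noncomputable def spectralNorm' {N : ℕ} (M : Matrix (Fin N) (Fin N) ℝ) : ℝ :=
  ‖(Matrix.toEuclideanCLM (𝕜 := ℝ) M :
      EuclideanSpace ℝ (Fin N) →L[ℝ] EuclideanSpace ℝ (Fin N))‖

section Aux

variable {N : ℕ}

/-- dot products of mulVec correspond to inner products on Euclidean space. -/
lemma dot_mulVec_eq_inner (M : Matrix (Fin N) (Fin N) ℝ) (a b : Fin N → ℝ) :
    a ⬝ᵥ M.mulVec b =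
      inner ℝ ((WithLp.equiv 2 (Fin N → ℝ)).symm a)
        ((Matrix.toEuclideanCLM (𝕜 := ℝ) M) ((WithLp.equiv 2 (Fin N → ℝ)).symm b)) := by
  simp only [WithLp.equiv_symm_apply, Matrix.toEuclideanCLM_toLp]
  simp [PiLp.inner_apply, RCLike.inner_apply, Matrix.toLin'_apply, dotProduct, mul_comm]

lemma inner_symm_symm (a b : Fin N → ℝ) :
    (inner ℝ ((WithLp.equiv 2 (Fin N → ℝ)).symm a) ((WithLp.equiv 2 (Fin N → ℝ)).symm b) : ℝ)
      = ∑ i, a i * b i := by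
  simp [PiLp.inner_apply, RCLike.inner_apply, mul_comm]

/-- Main auxiliary facts about the regularized matrix `A = M + σ²I`. -/
lemma aux_facts (σ : ℝ) (hσ : 0 < σ) (M : Matrix (Fin N) (Fin N) ℝ)
    (hsymm : M.IsSymm) (hpsd : ∀ x : Fin N → ℝ, 0 ≤ x ⬝ᵥ M.mulVec x) :
    (Matrix.toEuclideanCLM (𝕜 := ℝ) (M + σ ^ 2 • (1 : Matrix (Fin N) (Fin N) ℝ))) *
        (Matrix.toEuclideanCLM (𝕜 := ℝ) (M + σ ^ 2 • (1 : Matrix (Fin N) (Fin N) ℝ))⁻¹) = 1 ∧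
    (Matrix.toEuclideanCLM (𝕜 := ℝ) (M + σ ^ 2 • (1 : Matrix (Fin N) (Fin N) ℝ))⁻¹) *
        (Matrix.toEuclideanCLM (𝕜 := ℝ) (M + σ ^ 2 • (1 : Matrix (Fin N) (Fin N) ℝ))) = 1 ∧
    ‖(Matrix.toEuclideanCLM (𝕜 := ℝ) (M + σ ^ 2 • (1 : Matrix (Fin N) (Fin N) ℝ))⁻¹ :
        EuclideanSpace ℝ (Fin N) →L[ℝ] EuclideanSpace ℝ (Fin N))‖ ≤ (σ ^ 2)⁻¹ := by
  set A : Matrix (Fin N) (Fin N) ℝ := M + σ ^ 2 • (1 : Matrix (Fin N) (Fin N) ℝ) with hA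
  have hMpsd : M.PosSemidef := by
    refine Matrix.PosSemidef.of_dotProduct_mulVec_nonneg ?_ (fun x => by simpa using hpsd x)
    rw [Matrix.IsHermitian, Matrix.conjTranspose_eq_transpose_of_trivial]
    exact hsymm
  have h1pd : (σ ^ 2 • (1 : Matrix (Fin N) (Fin N) ℝ)).PosDef := by
    rw [Matrix.smul_one_eq_diagonal]
    exact Matrix.posDef_diagonal_iff.mpr (fun _ => by positivity)
  have hApd : A.PosDef := Matrix.PosDef.posSemidef_add hMpsd h1pd
  have hdet : IsUnit A.det := A.isUnit_iff_isUnit_det.mp hApd.isUnit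
  have hmul : A * A⁻¹ = 1 := Matrix.mul_nonsing_inv A hdet
  have hmul' : A⁻¹ * A = 1 := Matrix.nonsing_inv_mul A hdet
  set φ := Matrix.toEuclideanCLM (𝕜 := ℝ) (n := Fin N)
  have hBC : φ A * φ A⁻¹ = 1 := by rw [← map_mul, hmul, map_one]
  have hCB : φ A⁻¹ * φ A = 1 := by rw [← map_mul, hmul', map_one]
  refine ⟨hBC, hCB, ?_⟩
  -- lower bound for the quadratic form of A
  have hBlow : ∀ x : EuclideanSpace ℝ (Fin N), σ ^ 2 * ‖x‖ ^ 2 ≤ inner ℝ x (φ A x) := by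
    intro x
    have hx : x = (WithLp.equiv 2 (Fin N → ℝ)).symm ((WithLp.equiv 2 (Fin N → ℝ)) x) :=
      (Equiv.symm_apply_apply _ _).symm
    set y := (WithLp.equiv 2 (Fin N → ℝ)) x with hy
    have hAy : A.mulVec y = M.mulVec y + σ ^ 2 • y := by
      simp [hA, Matrix.add_mulVec, Matrix.smul_mulVec]
    have hnorm : ‖x‖ ^ 2 = y ⬝ᵥ y := by
      rw [← real_inner_self_eq_norm_sq, hx, inner_symm_symm]
      simp [dotProduct]
    have h0 : 0 ≤ y ⬝ᵥ M.mulVec y := hpsd y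
    have hsm : y ⬝ᵥ (σ ^ 2 • y) = σ ^ 2 * (y ⬝ᵥ y) := by
      simp only [dotProduct, Pi.smul_apply, smul_eq_mul, Finset.mul_sum]
      exact Finset.sum_congr rfl fun i _ => by ring
    have key : (inner ℝ x (φ A x) : ℝ) = y ⬝ᵥ M.mulVec y + σ ^ 2 * (y ⬝ᵥ y) := by
      conv_lhs => rw [hx]
      rw [← dot_mulVec_eq_inner, hAy, dotProduct_add, hsm]
    rw [key, hnorm]
    linarith
  -- operator norm bound for the inverse
  apply ContinuousLinearMap.opNorm_le_bound _ (by positivity)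
  intro y
  have hBCy : φ A (φ A⁻¹ y) = y := by
    have h := congrArg (fun f : EuclideanSpace ℝ (Fin N) →L[ℝ] EuclideanSpace ℝ (Fin N) => f y) hBC
    simpa [ContinuousLinearMap.mul_apply] using h
  have h1 : σ ^ 2 * ‖φ A⁻¹ y‖ ^ 2 ≤ inner ℝ (φ A⁻¹ y) y := by
    have := hBlow (φ A⁻¹ y)
    rwa [hBCy] at this
  have h2 : (inner ℝ (φ A⁻¹ y) y : ℝ) ≤ ‖φ A⁻¹ y‖ * ‖y‖ := real_inner_le_norm _ _
  by_cases hz : ‖φ A⁻¹ y‖ = 0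
  · rw [hz]; positivity
  · have hzpos : 0 < ‖φ A⁻¹ y‖ := lt_of_le_of_ne (norm_nonneg _) (Ne.symm hz)
    have h3 : σ ^ 2 * ‖φ A⁻¹ y‖ ≤ ‖y‖ := by nlinarith
    calc ‖φ A⁻¹ y‖ = (σ ^ 2)⁻¹ * (σ ^ 2 * ‖φ A⁻¹ y‖) := by field_simp
      _ ≤ (σ ^ 2)⁻¹ * ‖y‖ := mul_le_mul_of_nonneg_left h3 (by positivity)

end Aux

set_option maxHeartbeats 1000000 in
/-- Variance part of the mismatched-posterior lemma: the posterior-variance quadratic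
forms built from `(K̃, k̃)` and `(K, k)` differ by at most `(3σ⁻² + σ⁻⁴)N³ε`. -/
theorem abs_posterior_var_mismatch_le
    (N : ℕ) (hN : 1 ≤ N) (ε : ℝ) (hε0 : 0 ≤ ε) (hε1 : ε ≤ 1) (σ : ℝ) (hσ : 0 < σ)
    (K Kt : Matrix (Fin N) (Fin N) ℝ)
    (hK_symm : K.IsSymm) (hK_psd : ∀ x : Fin N → ℝ, 0 ≤ x ⬝ᵥ K.mulVec x)
    (hKt_symm : Kt.IsSymm) (hKt_psd : ∀ x : Fin N → ℝ, 0 ≤ x ⬝ᵥ Kt.mulVec x)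
    (hKdiff : spectralNorm' (Kt - K) ≤ N ^ 2 * ε)
    (k kt : Fin N → ℝ)
    (hk : ∑ i, (k i) ^ 2 ≤ N) (hkt : ∑ i, (kt i) ^ 2 ≤ N)
    (hkdiff : ∑ i, (kt i - k i) ^ 2 ≤ N ^ 3 * ε ^ 2) :
    |kt ⬝ᵥ (Kt + σ ^ 2 • (1 : Matrix (Fin N) (Fin N) ℝ))⁻¹.mulVec kt
      - k ⬝ᵥ (K + σ ^ 2 • (1 : Matrix (Fin N) (Fin N) ℝ))⁻¹.mulVec k| ≤
      (3 * (σ ^ 2)⁻¹ + (σ ^ 4)⁻¹) * N ^ 3 * ε := by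
  obtain ⟨hBC, hCB, hCn⟩ := aux_facts σ hσ K hK_symm hK_psd
  obtain ⟨hBtCt, hCtBt, hCtn⟩ := aux_facts σ hσ Kt hKt_symm hKt_psd
  set φ := Matrix.toEuclideanCLM (𝕜 := ℝ) (n := Fin N)
  set A : Matrix (Fin N) (Fin N) ℝ := K + σ ^ 2 • (1 : Matrix (Fin N) (Fin N) ℝ) with hA
  set At : Matrix (Fin N) (Fin N) ℝ := Kt + σ ^ 2 • (1 : Matrix (Fin N) (Fin N) ℝ) with hAt
  set B := φ A
  set Bt := φ At
  set C := φ A⁻¹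
  set Ct := φ At⁻¹
  set e := (WithLp.equiv 2 (Fin N → ℝ)).symm with he
  set u : EuclideanSpace ℝ (Fin N) := e kt with hu
  set v : EuclideanSpace ℝ (Fin N) := e k with hv
  -- rewrite the two quadratic forms as inner products
  have hVt : kt ⬝ᵥ At⁻¹.mulVec kt = inner ℝ u (Ct u) := dot_mulVec_eq_inner _ _ _
  have hV : k ⬝ᵥ A⁻¹.mulVec k = inner ℝ v (C v) := dot_mulVec_eq_inner _ _ _
  -- norm bounds on the vectors
  have hnu : ‖u‖ ^ 2 ≤ (N : ℝ) := by
    have : ‖u‖ ^ 2 = ∑ i, kt i ^ 2 := by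
      rw [← real_inner_self_eq_norm_sq, hu, he, inner_symm_symm]
      exact Finset.sum_congr rfl (fun i _ => (sq (kt i)).symm)
    rw [this]; exact hkt
  have hnv : ‖v‖ ^ 2 ≤ (N : ℝ) := by
    have : ‖v‖ ^ 2 = ∑ i, k i ^ 2 := by
      rw [← real_inner_self_eq_norm_sq, hv, he, inner_symm_symm]
      exact Finset.sum_congr rfl (fun i _ => (sq (k i)).symm)
    rw [this]; exact hk
  have huv : u - v = e (fun i => kt i - k i) := by
    apply (WithLp.equiv 2 (Fin N → ℝ)).injective
    ext i
    simp [hu, hv, he]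
  have hnuv : ‖u - v‖ ^ 2 ≤ (N : ℝ) ^ 3 * ε ^ 2 := by
    have : ‖u - v‖ ^ 2 = ∑ i, (kt i - k i) ^ 2 := by
      rw [← real_inner_self_eq_norm_sq, huv, inner_symm_symm]
      exact Finset.sum_congr rfl (fun i _ => (sq (kt i - k i)).symm)
    rw [this]; exact hkdiff
  -- the difference of inverses
  have hident : Ct - C = C * (B - Bt) * Ct := by
    rw [mul_sub, sub_mul, hCB, one_mul, mul_assoc, hBtCt, mul_one]
  have hBtB : ‖B - Bt‖ ≤ (N : ℝ) ^ 2 * ε := by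
    have h1 : Bt - B = φ (Kt - K) := by
      rw [← map_sub]
      congr 1
      rw [hAt, hA]; abel
    rw [norm_sub_rev, h1]
    exact hKdiff
  have hCtC : ‖Ct - C‖ ≤ (σ ^ 2)⁻¹ * ((N : ℝ) ^ 2 * ε) * (σ ^ 2)⁻¹ := by
    rw [hident]
    calc ‖C * (B - Bt) * Ct‖ ≤ ‖C * (B - Bt)‖ * ‖Ct‖ := norm_mul_le _ _
      _ ≤ ‖C‖ * ‖B - Bt‖ * ‖Ct‖ :=
          mul_le_mul_of_nonneg_right (norm_mul_le _ _) (norm_nonneg _)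
      _ ≤ (σ ^ 2)⁻¹ * ((N : ℝ) ^ 2 * ε) * (σ ^ 2)⁻¹ := by
          apply mul_le_mul (mul_le_mul hCn hBtB (norm_nonneg _) (by positivity)) hCtn
            (norm_nonneg _) (by positivity)
  -- decomposition
  have hdecomp : (inner ℝ u (Ct u) : ℝ) - inner ℝ v (C v)
      = inner ℝ u ((Ct - C) u) + (inner ℝ (u - v) (C u) + inner ℝ v (C (u - v))) := by
    simp only [ContinuousLinearMap.sub_apply, map_sub, inner_sub_left, inner_sub_right]
    ring
  -- bound each term
  set a := ‖u‖
  set b := ‖v‖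
  set c := ‖u - v‖
  have ha0 : 0 ≤ a := norm_nonneg _
  have hb0 : 0 ≤ b := norm_nonneg _
  have hc0 : 0 ≤ c := norm_nonneg _
  have t1 : |(inner ℝ u ((Ct - C) u) : ℝ)| ≤ a * (‖Ct - C‖ * a) :=
    (abs_real_inner_le_norm _ _).trans
      (mul_le_mul_of_nonneg_left (ContinuousLinearMap.le_opNorm _ _) ha0)
  have t2 : |(inner ℝ (u - v) (C u) : ℝ)| ≤ c * (‖C‖ * a) :=
    (abs_real_inner_le_norm _ _).trans
      (mul_le_mul_of_nonneg_left (ContinuousLinearMap.le_opNorm _ _) hc0)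
  have t3 : |(inner ℝ v (C (u - v)) : ℝ)| ≤ b * (‖C‖ * c) :=
    (abs_real_inner_le_norm _ _).trans
      (mul_le_mul_of_nonneg_left (ContinuousLinearMap.le_opNorm _ _) hb0)
  -- numeric bounds
  have hca : c * a ≤ (N : ℝ) ^ 2 * ε := by
    have h1 : (c * a) ^ 2 ≤ ((N : ℝ) ^ 2 * ε) ^ 2 := by
      calc (c * a) ^ 2 = c ^ 2 * a ^ 2 := by ring
        _ ≤ ((N : ℝ) ^ 3 * ε ^ 2) * N := mul_le_mul hnuv hnu (sq_nonneg _) (by positivity)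
        _ = ((N : ℝ) ^ 2 * ε) ^ 2 := by ring
    exact (pow_le_pow_iff_left₀ (by positivity) (by positivity) two_ne_zero).mp h1
  have hcb : c * b ≤ (N : ℝ) ^ 2 * ε := by
    have h1 : (c * b) ^ 2 ≤ ((N : ℝ) ^ 2 * ε) ^ 2 := by
      calc (c * b) ^ 2 = c ^ 2 * b ^ 2 := by ring
        _ ≤ ((N : ℝ) ^ 3 * ε ^ 2) * N := mul_le_mul hnuv hnv (sq_nonneg _) (by positivity)
        _ = ((N : ℝ) ^ 2 * ε) ^ 2 := by ring
    exact (pow_le_pow_iff_left₀ (by positivity) (by positivity) two_ne_zero).mp h1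
  have e1 : a * (‖Ct - C‖ * a) ≤ (σ ^ 4)⁻¹ * ((N : ℝ) ^ 3 * ε) := by
    have h1 : a * (‖Ct - C‖ * a) = ‖Ct - C‖ * a ^ 2 := by ring
    rw [h1]
    calc ‖Ct - C‖ * a ^ 2 ≤ ((σ ^ 2)⁻¹ * ((N : ℝ) ^ 2 * ε) * (σ ^ 2)⁻¹) * N :=
          mul_le_mul hCtC hnu (sq_nonneg _) (by positivity)
      _ = (σ ^ 4)⁻¹ * ((N : ℝ) ^ 3 * ε) := by
          rw [show (σ : ℝ) ^ 4 = σ ^ 2 * σ ^ 2 by ring, mul_inv]; ring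
  have e2 : c * (‖C‖ * a) ≤ (σ ^ 2)⁻¹ * ((N : ℝ) ^ 2 * ε) := by
    have h1 : c * (‖C‖ * a) = ‖C‖ * (c * a) := by ring
    rw [h1]
    exact mul_le_mul hCn hca (by positivity) (by positivity)
  have e3 : b * (‖C‖ * c) ≤ (σ ^ 2)⁻¹ * ((N : ℝ) ^ 2 * ε) := by
    have h1 : b * (‖C‖ * c) = ‖C‖ * (c * b) := by ring
    rw [h1]
    exact mul_le_mul hCn hcb (by positivity) (by positivity)
  have hN3 : (σ ^ 2)⁻¹ * ((N : ℝ) ^ 2 * ε) ≤ (σ ^ 2)⁻¹ * ((N : ℝ) ^ 3 * ε) := by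
    have hNc : (1 : ℝ) ≤ N := by exact_mod_cast hN
    have : (N : ℝ) ^ 2 ≤ (N : ℝ) ^ 3 := by nlinarith
    have : (N : ℝ) ^ 2 * ε ≤ (N : ℝ) ^ 3 * ε := by nlinarith
    have hσ2 : (0 : ℝ) ≤ (σ ^ 2)⁻¹ := by positivity
    exact mul_le_mul_of_nonneg_left this hσ2
  have hpos : (0 : ℝ) ≤ (σ ^ 2)⁻¹ * ((N : ℝ) ^ 3 * ε) := by positivity
  -- assemble
  rw [hVt, hV, hdecomp]
  calc |(inner ℝ u ((Ct - C) u) : ℝ) + (inner ℝ (u - v) (C u) + inner ℝ v (C (u - v)))|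
      ≤ |(inner ℝ u ((Ct - C) u) : ℝ)| + (|(inner ℝ (u - v) (C u) : ℝ)| + |(inner ℝ v (C (u - v)) : ℝ)|) :=
        (abs_add_le _ _).trans (by gcongr; exact abs_add_le _ _)
    _ ≤ a * (‖Ct - C‖ * a) + (c * (‖C‖ * a) + b * (‖C‖ * c)) := by gcongr
    _ ≤ (3 * (σ ^ 2)⁻¹ + (σ ^ 4)⁻¹) * N ^ 3 * ε := by nlinarith [e1, e2, e3, hN3, hpos]
end

section
/- Let N ≥ 1 be an integer, ε ∈ [0,1], σ > 0, and L̃ ≥ 0. Let K and K̃ be N×N real symmetric positive semidefinite matrices with ‖K̃ − K‖₂ ≤ N²ε, let k, k̃ ∈ ℝ^N satisfy ‖k̃‖₂² ≤ N and ‖k̃ − k‖₂² ≤ N³ε², and let y ∈ ℝ^N satisfy ‖y‖₂² ≤ N·L̃². Then |k̃ᵀ(K̃ + σ²I_N)⁻¹y − kᵀ(K + σ²I_N)⁻¹y| ≤ (σ⁻² + σ⁻⁴)·N³ε·L̃. -/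
open scoped Matrix BigOperators

namespace MeanAux

variable {N : ℕ}

noncomputable def e {N : ℕ} (v : Fin N → ℝ) : EuclideanSpace ℝ (Fin N) :=
  (WithLp.equiv 2 _).symm v

lemma e_inner (v w : Fin N → ℝ) : inner ℝ (e v) (e w) = v ⬝ᵥ w := by
  simp [e, PiLp.inner_apply, dotProduct, RCLike.inner_apply, mul_comm]

lemma e_norm_sq (v : Fin N → ℝ) : ‖e v‖ ^ 2 = ∑ i, v i ^ 2 := by
  rw [← real_inner_self_eq_norm_sq, e_inner]
  simp [dotProduct, sq]

lemma cs (v w : Fin N → ℝ) : |v ⬝ᵥ w| ≤ ‖e v‖ * ‖e w‖ := by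
  rw [← e_inner]; exact abs_real_inner_le_norm _ _

lemma e_mulVec (M : Matrix (Fin N) (Fin N) ℝ) (v : Fin N → ℝ) :
    e (M.mulVec v) = Matrix.toEuclideanCLM (𝕜 := ℝ) M (e v) := by
  rw [e, e]; rfl

lemma norm_mulVec_le (M : Matrix (Fin N) (Fin N) ℝ) (v : Fin N → ℝ) :
    ‖e (M.mulVec v)‖ ≤ spectralNorm' M * ‖e v‖ := by
  rw [e_mulVec]; exact (Matrix.toEuclideanCLM (𝕜 := ℝ) M).le_opNorm _

lemma spectralNorm'_sub_comm (A B : Matrix (Fin N) (Fin N) ℝ) :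
    spectralNorm' (A - B) = spectralNorm' (B - A) := by
  unfold spectralNorm'
  rw [map_sub, map_sub, norm_sub_rev]

lemma le_of_sq_le' {a b : ℝ} (ha : 0 ≤ a) (hb : 0 ≤ b) (h : a ^ 2 ≤ b ^ 2) : a ≤ b := by
  nlinarith

lemma posDef_add (σ : ℝ) (hσ : 0 < σ) (K : Matrix (Fin N) (Fin N) ℝ)
    (hK_symm : K.IsSymm) (hK_psd : ∀ x : Fin N → ℝ, 0 ≤ x ⬝ᵥ K.mulVec x) :
    (K + σ ^ 2 • (1 : Matrix (Fin N) (Fin N) ℝ)).PosDef := by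
  have hsymm : (K + σ ^ 2 • (1 : Matrix (Fin N) (Fin N) ℝ))ᵀ
      = K + σ ^ 2 • (1 : Matrix (Fin N) (Fin N) ℝ) := by
    rw [Matrix.transpose_add, Matrix.transpose_smul, Matrix.transpose_one, hK_symm.eq]
  refine Matrix.PosDef.of_dotProduct_mulVec_pos ?_ ?_
  · show _ᴴ = _
    have hct : (K + σ ^ 2 • (1 : Matrix (Fin N) (Fin N) ℝ))ᴴ
        = (K + σ ^ 2 • (1 : Matrix (Fin N) (Fin N) ℝ))ᵀ := by
      ext i j; simp [Matrix.conjTranspose_apply]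
    rw [hct, hsymm]
  · intro x hx
    have h1 : (K + σ ^ 2 • (1 : Matrix (Fin N) (Fin N) ℝ)).mulVec x
        = K.mulVec x + σ ^ 2 • x := by
      rw [Matrix.add_mulVec, Matrix.smul_mulVec, Matrix.one_mulVec]
    rw [h1]
    have hsx : star x = x := by simp
    rw [hsx, dotProduct_add, dotProduct_smul]
    have h2 : 0 < x ⬝ᵥ x := by
      have hnn : 0 ≤ x ⬝ᵥ x := Finset.sum_nonneg fun i _ => mul_self_nonneg _
      rcases lt_or_eq_of_le hnn with h | h
      · exact h
      · exact absurd (dotProduct_self_eq_zero.mp h.symm) hx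
    have := hK_psd x
    positivity

lemma coercive (σ : ℝ) (K : Matrix (Fin N) (Fin N) ℝ)
    (hK_psd : ∀ x : Fin N → ℝ, 0 ≤ x ⬝ᵥ K.mulVec x) (u : Fin N → ℝ) :
    σ ^ 2 * ‖e u‖ ^ 2 ≤ u ⬝ᵥ (K + σ ^ 2 • (1 : Matrix (Fin N) (Fin N) ℝ)).mulVec u := by
  have h1 : (K + σ ^ 2 • (1 : Matrix (Fin N) (Fin N) ℝ)).mulVec u
      = K.mulVec u + σ ^ 2 • u := by
    rw [Matrix.add_mulVec, Matrix.smul_mulVec, Matrix.one_mulVec]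
  rw [h1, dotProduct_add, dotProduct_smul]
  have h2 : u ⬝ᵥ u = ‖e u‖ ^ 2 := by
    rw [e_norm_sq]; simp [dotProduct, sq]
  have := hK_psd u
  rw [smul_eq_mul, h2]
  linarith

lemma inv_mulVec_cancel (σ : ℝ) (hσ : 0 < σ) (K : Matrix (Fin N) (Fin N) ℝ)
    (hK_symm : K.IsSymm) (hK_psd : ∀ x : Fin N → ℝ, 0 ≤ x ⬝ᵥ K.mulVec x) (y : Fin N → ℝ) :
    (K + σ ^ 2 • (1 : Matrix (Fin N) (Fin N) ℝ)).mulVec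
      ((K + σ ^ 2 • (1 : Matrix (Fin N) (Fin N) ℝ))⁻¹.mulVec y) = y := by
  have := (posDef_add σ hσ K hK_symm hK_psd).isUnit
  rw [Matrix.mulVec_mulVec, Matrix.mul_nonsing_inv _ ((Matrix.isUnit_iff_isUnit_det _).mp this),
    Matrix.one_mulVec]

lemma inv_norm_bound (σ : ℝ) (hσ : 0 < σ) (K : Matrix (Fin N) (Fin N) ℝ)
    (hK_symm : K.IsSymm) (hK_psd : ∀ x : Fin N → ℝ, 0 ≤ x ⬝ᵥ K.mulVec x) (y : Fin N → ℝ) :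
    ‖e ((K + σ ^ 2 • (1 : Matrix (Fin N) (Fin N) ℝ))⁻¹.mulVec y)‖ ≤ (σ ^ 2)⁻¹ * ‖e y‖ := by
  set u := (K + σ ^ 2 • (1 : Matrix (Fin N) (Fin N) ℝ))⁻¹.mulVec y with hu
  have hAu : (K + σ ^ 2 • (1 : Matrix (Fin N) (Fin N) ℝ)).mulVec u = y :=
    inv_mulVec_cancel σ hσ K hK_symm hK_psd y
  have h1 : σ ^ 2 * ‖e u‖ ^ 2 ≤ u ⬝ᵥ y := by
    have := coercive σ K hK_psd u
    rwa [hAu] at this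
  have h2 : u ⬝ᵥ y ≤ ‖e u‖ * ‖e y‖ := (abs_le.mp (cs u y)).2
  have hσ2 : 0 < σ ^ 2 := by positivity
  rcases eq_or_lt_of_le (norm_nonneg (e u)) with h | h
  · rw [← h]; positivity
  · have : σ ^ 2 * ‖e u‖ ^ 2 ≤ ‖e u‖ * ‖e y‖ := le_trans h1 h2
    rw [sq (‖e u‖)] at this
    have : σ ^ 2 * ‖e u‖ ≤ ‖e y‖ := by
      nlinarith
    calc ‖e u‖ = (σ ^ 2)⁻¹ * (σ ^ 2 * ‖e u‖) := by field_simp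
    _ ≤ (σ ^ 2)⁻¹ * ‖e y‖ := by
        exact mul_le_mul_of_nonneg_left this (by positivity)

end MeanAux

open MeanAux in
/-- Mean part of the mismatched-posterior lemma: the posterior means built from
`(K̃, k̃)` and `(K, k)` differ by at most `(σ⁻² + σ⁻⁴)N³εL̃`. -/
theorem abs_posterior_mean_mismatch_le
    (N : ℕ) (hN : 1 ≤ N) (ε : ℝ) (hε0 : 0 ≤ ε) (hε1 : ε ≤ 1) (σ : ℝ) (hσ : 0 < σ)
    (Lt : ℝ) (hLt : 0 ≤ Lt)
    (K Kt : Matrix (Fin N) (Fin N) ℝ)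
    (hK_symm : K.IsSymm) (hK_psd : ∀ x : Fin N → ℝ, 0 ≤ x ⬝ᵥ K.mulVec x)
    (hKt_symm : Kt.IsSymm) (hKt_psd : ∀ x : Fin N → ℝ, 0 ≤ x ⬝ᵥ Kt.mulVec x)
    (hKdiff : spectralNorm' (Kt - K) ≤ N ^ 2 * ε)
    (k kt : Fin N → ℝ)
    (hkt : ∑ i, (kt i) ^ 2 ≤ N)
    (hkdiff : ∑ i, (kt i - k i) ^ 2 ≤ N ^ 3 * ε ^ 2)
    (y : Fin N → ℝ) (hy : ∑ i, (y i) ^ 2 ≤ N * Lt ^ 2) :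
    |kt ⬝ᵥ (Kt + σ ^ 2 • (1 : Matrix (Fin N) (Fin N) ℝ))⁻¹.mulVec y
      - k ⬝ᵥ (K + σ ^ 2 • (1 : Matrix (Fin N) (Fin N) ℝ))⁻¹.mulVec y| ≤
      ((σ ^ 2)⁻¹ + (σ ^ 4)⁻¹) * N ^ 3 * ε * Lt := by
  set A := K + σ ^ 2 • (1 : Matrix (Fin N) (Fin N) ℝ) with hA
  set At := Kt + σ ^ 2 • (1 : Matrix (Fin N) (Fin N) ℝ) with hAt
  set a := A⁻¹.mulVec y with ha
  set at' := At⁻¹.mulVec y with hat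
  -- key identity
  have hId : at' - a = At⁻¹.mulVec ((K - Kt).mulVec a) := by
    have h1 : (K - Kt).mulVec a = y - At.mulVec a := by
      have h2 : A.mulVec a = y := inv_mulVec_cancel σ hσ K hK_symm hK_psd y
      have : (K - Kt).mulVec a = A.mulVec a - At.mulVec a := by
        rw [hA, hAt]
        rw [← Matrix.sub_mulVec]
        congr 1
        abel
      rw [this, h2]
    rw [h1, Matrix.mulVec_sub]
    congr 1
    have hdet : IsUnit At.det :=
      (Matrix.isUnit_iff_isUnit_det _).mp (posDef_add σ hσ Kt hKt_symm hKt_psd).isUnit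
    rw [Matrix.mulVec_mulVec, Matrix.nonsing_inv_mul _ hdet, Matrix.one_mulVec]
  -- decomposition
  have hDec : kt ⬝ᵥ at' - k ⬝ᵥ a = kt ⬝ᵥ (at' - a) + (kt - k) ⬝ᵥ a := by
    rw [dotProduct_sub, sub_dotProduct]; ring
  rw [hDec]
  -- norm bounds
  set s := Real.sqrt N with hs
  have hs0 : 0 ≤ s := Real.sqrt_nonneg _
  have hs2 : s ^ 2 = N := Real.sq_sqrt (by positivity)
  have hs1 : 1 ≤ s := by
    rw [hs, show (1:ℝ) = Real.sqrt 1 by simp]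
    exact Real.sqrt_le_sqrt (by exact_mod_cast hN)
  have hkt' : ‖e kt‖ ≤ s := by
    rw [hs, ← Real.sqrt_sq (norm_nonneg (e kt))]
    exact Real.sqrt_le_sqrt (by rw [e_norm_sq]; exact hkt)
  have hkd' : ‖e (kt - k)‖ ≤ s ^ 3 * ε := by
    have h1 : ‖e (kt - k)‖ ^ 2 ≤ (s ^ 3 * ε) ^ 2 := by
      rw [e_norm_sq]
      calc ∑ i, (kt i - k i) ^ 2 ≤ N ^ 3 * ε ^ 2 := by
            simpa using hkdiff
      _ = (s ^ 3 * ε) ^ 2 := by rw [← hs2]; ring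
    exact le_of_sq_le' (norm_nonneg _) (by positivity) h1
  have hy' : ‖e y‖ ≤ s * Lt := by
    have h1 : ‖e y‖ ^ 2 ≤ (s * Lt) ^ 2 := by
      rw [e_norm_sq]
      calc ∑ i, (y i) ^ 2 ≤ N * Lt ^ 2 := hy
      _ = (s * Lt) ^ 2 := by rw [← hs2]; ring
    exact le_of_sq_le' (norm_nonneg _) (by positivity) h1
  have hEa : ‖e a‖ ≤ (σ ^ 2)⁻¹ * ‖e y‖ := inv_norm_bound σ hσ K hK_symm hK_psd y
  have hspec : spectralNorm' (K - Kt) ≤ N ^ 2 * ε := by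
    rw [spectralNorm'_sub_comm]; exact hKdiff
  have hEd : ‖e (at' - a)‖ ≤ (σ ^ 2)⁻¹ * (N ^ 2 * ε * ‖e a‖) := by
    rw [hId]
    calc ‖e (At⁻¹.mulVec ((K - Kt).mulVec a))‖
        ≤ (σ ^ 2)⁻¹ * ‖e ((K - Kt).mulVec a)‖ :=
          inv_norm_bound σ hσ Kt hKt_symm hKt_psd _
      _ ≤ (σ ^ 2)⁻¹ * (N ^ 2 * ε * ‖e a‖) := by
          apply mul_le_mul_of_nonneg_left _ (by positivity)
          calc ‖e ((K - Kt).mulVec a)‖ ≤ spectralNorm' (K - Kt) * ‖e a‖ := norm_mulVec_le _ _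
          _ ≤ N ^ 2 * ε * ‖e a‖ := mul_le_mul_of_nonneg_right hspec (norm_nonneg _)
  -- assemble
  have hmain : |kt ⬝ᵥ (at' - a) + (kt - k) ⬝ᵥ a|
      ≤ ‖e kt‖ * ‖e (at' - a)‖ + ‖e (kt - k)‖ * ‖e a‖ :=
    le_trans (abs_add_le _ _) (add_le_add (cs _ _) (cs _ _))
  refine le_trans hmain ?_
  have hσ2 : (0:ℝ) < (σ ^ 2)⁻¹ := by positivity
  have hEa' : ‖e a‖ ≤ (σ ^ 2)⁻¹ * (s * Lt) :=
    le_trans hEa (mul_le_mul_of_nonneg_left hy' (le_of_lt hσ2))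
  have hEd' : ‖e (at' - a)‖ ≤ (σ ^ 2)⁻¹ * (N ^ 2 * ε * ((σ ^ 2)⁻¹ * (s * Lt))) := by
    refine le_trans hEd ?_
    apply mul_le_mul_of_nonneg_left _ (le_of_lt hσ2)
    exact mul_le_mul_of_nonneg_left hEa' (by positivity)
  have t1 : ‖e kt‖ * ‖e (at' - a)‖ ≤ s * ((σ ^ 2)⁻¹ * (N ^ 2 * ε * ((σ ^ 2)⁻¹ * (s * Lt)))) :=
    mul_le_mul hkt' hEd' (norm_nonneg _) hs0
  have t2 : ‖e (kt - k)‖ * ‖e a‖ ≤ (s ^ 3 * ε) * ((σ ^ 2)⁻¹ * (s * Lt)) :=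
    mul_le_mul hkd' hEa' (norm_nonneg _) (by positivity)
  have hσ4 : (σ ^ 4)⁻¹ = (σ ^ 2)⁻¹ * (σ ^ 2)⁻¹ := by
    rw [← mul_inv]; norm_num; ring_nf
  have hN' : (1:ℝ) ≤ (N:ℝ) := by exact_mod_cast hN
  have key : s * ((σ ^ 2)⁻¹ * (N ^ 2 * ε * ((σ ^ 2)⁻¹ * (s * Lt))))
      + (s ^ 3 * ε) * ((σ ^ 2)⁻¹ * (s * Lt))
      ≤ ((σ ^ 2)⁻¹ + (σ ^ 4)⁻¹) * N ^ 3 * ε * Lt := by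
    have h1 : s * ((σ ^ 2)⁻¹ * ((N:ℝ) ^ 2 * ε * ((σ ^ 2)⁻¹ * (s * Lt))))
        = (σ ^ 4)⁻¹ * ((N:ℝ) ^ 3 * ε * Lt) := by
      rw [hσ4]
      have hss : s * s = (N:ℝ) := by rw [← sq]; exact hs2
      linear_combination ((σ ^ 2)⁻¹ * (σ ^ 2)⁻¹ * (N:ℝ) ^ 2 * ε * Lt) * hss
    have h2 : (s ^ 3 * ε) * ((σ ^ 2)⁻¹ * (s * Lt)) = (σ ^ 2)⁻¹ * ((N:ℝ) ^ 2 * ε * Lt) := by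
      have h4 : s ^ 3 * s = (N:ℝ) ^ 2 := by
        rw [show s ^ 3 * s = (s ^ 2) ^ 2 by ring, hs2]
      linear_combination ((σ ^ 2)⁻¹ * ε * Lt) * h4
    rw [h1, h2]
    have h3 : (N:ℝ) ^ 2 ≤ (N:ℝ) ^ 3 := by nlinarith
    have h5 : (σ ^ 2)⁻¹ * ((N:ℝ) ^ 2 * ε * Lt) ≤ (σ ^ 2)⁻¹ * ((N:ℝ) ^ 3 * ε * Lt) := by
      apply mul_le_mul_of_nonneg_left _ (le_of_lt hσ2)
      apply mul_le_mul_of_nonneg_right _ hLt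
      exact mul_le_mul_of_nonneg_right h3 hε0
    linarith
  linarith
end

section
/- Let K be a T×T real symmetric positive semidefinite matrix with K_{tt} ≤ 1 for all t, and let σ > 0. Define s_1 = K_{11}, and for 2 ≤ t ≤ T define s_t = K_{tt} − kᵀ(K^{(t−1)} + σ²I_{t−1})⁻¹k, where K^{(t−1)} is the leading (t−1)×(t−1) principal submatrix of K and k = (K_{1t}, …, K_{(t−1)t})ᵀ. Then 0 ≤ s_t ≤ 1 for every t, and ∑_{t=1}^T s_t ≤ log det(I_T + σ⁻²K) / log(1 + σ⁻²). -/
open scoped Matrix BigOperators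


open Matrix in
private lemma quad_entry_aux {n : ℕ} (A : Matrix (Fin n) (Fin n) ℝ) (v : Fin n → ℝ) :
    ((Matrix.of fun (_ : Fin 1) (j : Fin n) => v j) * A *
        (Matrix.of fun (i : Fin n) (_ : Fin 1) => v i)) 0 0 = v ⬝ᵥ A *ᵥ v := by
  simp only [Matrix.mul_apply, Matrix.of_apply, dotProduct, Matrix.mulVec,
    Finset.sum_mul, Finset.mul_sum]
  rw [Finset.sum_comm]
  exact Finset.sum_congr rfl fun i _ => Finset.sum_congr rfl fun j _ => by ring

open Matrix in
private lemma key_aux {T : ℕ} (σ : ℝ) (hσ : 0 < σ) (K : Matrix (Fin T) (Fin T) ℝ)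
    (h_symm : K.IsSymm) (hK : K.PosSemidef)
    {n : ℕ} (hn : n + 1 ≤ T) (hn' : n ≤ T) (t : Fin T)
    (ht : t = Fin.castLE hn (Fin.last n))
    (v : Fin n → ℝ) (hv : v = fun i => K (Fin.castLE hn' i) t)
    (A : Matrix (Fin n) (Fin n) ℝ)
    (hA : A = K.submatrix (Fin.castLE hn') (Fin.castLE hn') + σ ^ 2 • 1) :
    0 ≤ K t t - v ⬝ᵥ A⁻¹ *ᵥ v ∧ 0 ≤ v ⬝ᵥ A⁻¹ *ᵥ v ∧
      (K.submatrix (Fin.castLE hn) (Fin.castLE hn)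
          + σ ^ 2 • (1 : Matrix (Fin (n + 1)) (Fin (n + 1)) ℝ)).det
        = A.det * (σ ^ 2 + (K t t - v ⬝ᵥ A⁻¹ *ᵥ v)) := by
  subst hv hA ht
  have hσ2 : (0 : ℝ) < σ ^ 2 := by positivity
  set t : Fin T := Fin.castLE hn (Fin.last n) with htdef
  have hone : ∀ m : ℕ, (σ ^ 2 • (1 : Matrix (Fin m) (Fin m) ℝ)).PosDef := by
    intro m
    rw [Matrix.smul_one_eq_diagonal]
    exact Matrix.posDef_diagonal_iff.mpr fun _ => hσ2
  have hApd : (K.submatrix (Fin.castLE hn') (Fin.castLE hn') + σ ^ 2 •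
      (1 : Matrix (Fin n) (Fin n) ℝ)).PosDef :=
    Matrix.PosDef.posSemidef_add (hK.submatrix _) (hone n)
  haveI : Invertible (K.submatrix (Fin.castLE hn') (Fin.castLE hn') + σ ^ 2 •
      (1 : Matrix (Fin n) (Fin n) ℝ)) := hApd.isUnit.invertible
  set A : Matrix (Fin n) (Fin n) ℝ :=
    K.submatrix (Fin.castLE hn') (Fin.castLE hn') + σ ^ 2 • 1 with hAdef
  set v : Fin n → ℝ := fun i => K (Fin.castLE hn' i) t with hvdef
  set B : Matrix (Fin n) (Fin 1) ℝ := Matrix.of fun i _ => v i with hBdef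
  have hBH : Bᴴ = Matrix.of fun (_ : Fin 1) (j : Fin n) => v j := by
    ext i j
    simp [hBdef, Matrix.conjTranspose_apply]
  have hcast : ∀ i : Fin n, Fin.castLE hn (Fin.castAdd 1 i) = Fin.castLE hn' i :=
    fun i => rfl
  have hlast : ∀ j : Fin 1, Fin.castLE hn (Fin.natAdd n j) = t := by
    intro j
    rw [Subsingleton.elim j 0]
    exact Fin.val_injective rfl
  have blockEq : (K.submatrix (Fin.castLE hn) (Fin.castLE hn)).submatrix
        finSumFinEquiv finSumFinEquiv
      = Matrix.fromBlocks (K.submatrix (Fin.castLE hn') (Fin.castLE hn')) B Bᴴ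
          (Matrix.of fun _ _ => K t t) := by
    rw [hBH]
    ext i j
    rcases i with i | i <;> rcases j with j | j
    · simp [hcast]
    · simp only [Matrix.submatrix_apply, Equiv.coe_fn_mk, finSumFinEquiv_apply_left,
        finSumFinEquiv_apply_right, Matrix.fromBlocks_apply₁₂, Matrix.of_apply, hcast, hlast]
      rfl
    · simp only [Matrix.submatrix_apply, Equiv.coe_fn_mk, finSumFinEquiv_apply_right,
        finSumFinEquiv_apply_left, Matrix.fromBlocks_apply₂₁, Matrix.of_apply, hcast, hlast]
      exact (h_symm.apply _ _).symm
    · simp [hlast]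
  have M1eq : (K.submatrix (Fin.castLE hn) (Fin.castLE hn)
        + σ ^ 2 • (1 : Matrix (Fin (n + 1)) (Fin (n + 1)) ℝ)).submatrix
          finSumFinEquiv finSumFinEquiv
      = Matrix.fromBlocks A B Bᴴ (Matrix.of fun _ _ => K t t + σ ^ 2) := by
    have h1 : (K.submatrix (Fin.castLE hn) (Fin.castLE hn)
          + σ ^ 2 • (1 : Matrix (Fin (n + 1)) (Fin (n + 1)) ℝ)).submatrix
            finSumFinEquiv finSumFinEquiv
        = (K.submatrix (Fin.castLE hn) (Fin.castLE hn)).submatrix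
            finSumFinEquiv finSumFinEquiv
          + σ ^ 2 • (1 : Matrix (Fin n ⊕ Fin 1) (Fin n ⊕ Fin 1) ℝ) := by
      ext x y
      simp [Matrix.submatrix_apply, Matrix.one_apply, EmbeddingLike.apply_eq_iff_eq]
    rw [h1, blockEq, ← Matrix.fromBlocks_one (l := Fin n) (m := Fin 1),
      Matrix.fromBlocks_smul, Matrix.fromBlocks_add, Matrix.fromBlocks_inj]
    refine ⟨hAdef.symm, by simp, by simp, ?_⟩
    ext i j
    have : i = j := Subsingleton.elim i j
    subst this
    simp [Matrix.one_apply]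
  have entry_eq : (Bᴴ * A⁻¹ * B) 0 0 = v ⬝ᵥ A⁻¹ *ᵥ v := by
    rw [hBH, hBdef]
    exact quad_entry_aux _ v
  refine ⟨?_, ?_, ?_⟩
  · -- Schur complement nonneg
    have hcorner : (Matrix.fromBlocks (σ ^ 2 • (1 : Matrix (Fin n) (Fin n) ℝ)) 0 0
        (0 : Matrix (Fin 1) (Fin 1) ℝ)).PosSemidef := by
      rw [Matrix.smul_one_eq_diagonal, show (0 : Matrix (Fin 1) (Fin 1) ℝ)
          = Matrix.diagonal (fun _ => (0:ℝ)) by simp, Matrix.fromBlocks_diagonal]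
      refine Matrix.PosSemidef.diagonal ?_
      intro i
      rcases i with i | i <;> simp [hσ2.le]
    have hblockPSD : (Matrix.fromBlocks A B Bᴴ (Matrix.of fun _ _ => K t t)).PosSemidef := by
      have h1 : Matrix.fromBlocks A B Bᴴ (Matrix.of fun _ _ => K t t)
          = (K.submatrix (Fin.castLE hn) (Fin.castLE hn)).submatrix
              finSumFinEquiv finSumFinEquiv
            + Matrix.fromBlocks (σ ^ 2 • (1 : Matrix (Fin n) (Fin n) ℝ)) 0 0 0 := by
        rw [blockEq, Matrix.fromBlocks_add, Matrix.fromBlocks_inj]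
        exact ⟨hAdef, by simp, by simp, by simp⟩
      rw [h1]
      exact ((hK.submatrix _).submatrix _).add hcorner
    have hschur := (Matrix.PosDef.fromBlocks₁₁ B (Matrix.of fun _ _ => K t t) hApd).mp
      hblockPSD
    have h00 := hschur.dotProduct_mulVec_nonneg (fun _ => 1)
    simp only [star_trivial, dotProduct, Matrix.mulVec, Fin.sum_univ_one, one_mul,
      mul_one, Matrix.sub_apply, Matrix.of_apply] at h00
    rwa [entry_eq] at h00
  · have h := hApd.inv.posSemidef.dotProduct_mulVec_nonneg v
    simpa using h
  · rw [← Matrix.det_submatrix_equiv_self finSumFinEquiv, M1eq, Matrix.det_fromBlocks₁₁]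
    congr 1
    rw [Matrix.det_fin_one, Matrix.invOf_eq_nonsing_inv]
    simp only [Matrix.sub_apply, Matrix.of_apply]
    rw [entry_eq]
    ring

/-- The posterior variances `s_t` of a PSD kernel matrix with unit-bounded diagonal lie in
`[0,1]`, and their sum is bounded by `log det(I + σ⁻²K) / log(1 + σ⁻²)`. -/
theorem sum_posterior_var_le_log_det_div
    (T : ℕ) (σ : ℝ) (hσ : 0 < σ)
    (K : Matrix (Fin T) (Fin T) ℝ)
    (h_symm : K.IsSymm) (h_psd : ∀ x : Fin T → ℝ, 0 ≤ x ⬝ᵥ K.mulVec x)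
    (h_diag : ∀ t, K t t ≤ 1)
    (s : Fin T → ℝ)
    (hs : ∀ t : Fin T,
      s t = K t t -
        (fun i : Fin t.val => K (Fin.castLE t.isLt.le i) t) ⬝ᵥ
          ((K.submatrix (Fin.castLE t.isLt.le) (Fin.castLE t.isLt.le)
              + σ ^ 2 • (1 : Matrix (Fin t.val) (Fin t.val) ℝ))⁻¹.mulVec
            (fun i : Fin t.val => K (Fin.castLE t.isLt.le i) t))) :
    (∀ t, 0 ≤ s t ∧ s t ≤ 1) ∧
      ∑ t : Fin T, s t ≤
        Real.log (1 + (σ ^ 2)⁻¹ • K).det / Real.log (1 + (σ ^ 2)⁻¹) := by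
  have hσ2 : (0 : ℝ) < σ ^ 2 := by positivity
  have hK : K.PosSemidef := by
    refine Matrix.PosSemidef.of_dotProduct_mulVec_nonneg ?_ fun x => by simpa using h_psd x
    ext i j
    simp only [Matrix.conjTranspose_apply, star_trivial]
    exact h_symm.apply i j
  have part1 : ∀ t : Fin T, 0 ≤ s t ∧ s t ≤ 1 := by
    intro t
    have hk := key_aux σ hσ K h_symm hK t.isLt t.isLt.le t rfl _ rfl _ rfl
    refine ⟨by rw [hs t]; exact hk.1, ?_⟩
    rw [hs t]
    have h2 := hk.2.1
    have h3 := h_diag t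
    linarith
  have detProd : ∀ (n : ℕ) (hn : n ≤ T),
      (K.submatrix (Fin.castLE hn) (Fin.castLE hn) + σ ^ 2 •
          (1 : Matrix (Fin n) (Fin n) ℝ)).det
        = ∏ i : Fin n, (σ ^ 2 + s (Fin.castLE hn i)) := by
    intro n
    induction n with
    | zero => intro hn; simp [Matrix.det_fin_zero]
    | succ n ih =>
      intro hn
      have hn' : n ≤ T := Nat.le_of_succ_le hn
      have hk := key_aux σ hσ K h_symm hK hn hn' (Fin.castLE hn (Fin.last n)) rfl _ rfl _ rfl
      rw [Fin.prod_univ_castSucc]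
      have hcs : ∀ i : Fin n, Fin.castLE hn i.castSucc = Fin.castLE hn' i := fun i => rfl
      simp only [hcs]
      rw [← ih hn', hs (Fin.castLE hn (Fin.last n))]
      exact hk.2.2
  have detFull : (K + σ ^ 2 • 1).det = ∏ t : Fin T, (σ ^ 2 + s t) := by
    have h := detProd T (le_refl T)
    have hid : (Fin.castLE (le_refl T)) = (id : Fin T → Fin T) := funext fun _ => rfl
    rw [hid, Matrix.submatrix_id_id] at h
    simpa using h
  refine ⟨part1, ?_⟩
  have hdetI : (1 + (σ ^ 2)⁻¹ • K).det = ∏ t : Fin T, (1 + (σ ^ 2)⁻¹ * s t) := by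
    have h1 : (1 : Matrix (Fin T) (Fin T) ℝ) + (σ ^ 2)⁻¹ • K
        = (σ ^ 2)⁻¹ • (K + σ ^ 2 • 1) := by
      rw [smul_add, smul_smul, inv_mul_cancel₀ hσ2.ne', one_smul, add_comm]
    rw [h1, Matrix.det_smul, detFull,
      show ((σ ^ 2)⁻¹ : ℝ) ^ Fintype.card (Fin T) = ∏ _t : Fin T, (σ ^ 2)⁻¹ by
        simp [Finset.prod_const],
      ← Finset.prod_mul_distrib]
    refine Finset.prod_congr rfl fun t _ => ?_
    rw [mul_add, inv_mul_cancel₀ hσ2.ne']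
  have hc : (0 : ℝ) < (σ ^ 2)⁻¹ := by positivity
  have hpos1 : ∀ t : Fin T, 0 < 1 + (σ ^ 2)⁻¹ * s t := fun t =>
    add_pos_of_pos_of_nonneg one_pos (mul_nonneg hc.le (part1 t).1)
  have hlogdet : Real.log (1 + (σ ^ 2)⁻¹ • K).det
      = ∑ t : Fin T, Real.log (1 + (σ ^ 2)⁻¹ * s t) := by
    rw [hdetI]
    exact Real.log_prod fun t _ => (hpos1 t).ne'
  have hlogpos : 0 < Real.log (1 + (σ ^ 2)⁻¹) := Real.log_pos (by linarith)
  have hterm : ∀ t : Fin T, s t * Real.log (1 + (σ ^ 2)⁻¹)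
      ≤ Real.log (1 + (σ ^ 2)⁻¹ * s t) := by
    intro t
    obtain ⟨h0, h1⟩ := part1 t
    have hcc := strictConcaveOn_log_Ioi.concaveOn.2 (Set.mem_Ioi.mpr one_pos)
      (Set.mem_Ioi.mpr (show (0 : ℝ) < 1 + (σ ^ 2)⁻¹ by linarith))
      (show (0 : ℝ) ≤ 1 - s t by linarith) h0 (by ring)
    simp only [smul_eq_mul] at hcc
    rw [show (1 - s t) * 1 + s t * (1 + (σ ^ 2)⁻¹) = 1 + (σ ^ 2)⁻¹ * s t by ring] at hcc
    simp only [Real.log_one, mul_zero, zero_add] at hcc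
    exact hcc
  rw [le_div_iff₀ hlogpos]
  calc (∑ t : Fin T, s t) * Real.log (1 + (σ ^ 2)⁻¹)
      = ∑ t : Fin T, s t * Real.log (1 + (σ ^ 2)⁻¹) := Finset.sum_mul _ _ _
    _ ≤ ∑ t : Fin T, Real.log (1 + (σ ^ 2)⁻¹ * s t) :=
        Finset.sum_le_sum fun t _ => hterm t
    _ = Real.log (1 + (σ ^ 2)⁻¹ • K).det := hlogdet.symm
end

section
/- Let ε ∈ [0,1], σ > 0, and let N ≥ 1 and m ≥ 1 be integers with T = mN. Let K be a T×T real symmetric positive semidefinite matrix with all entries in [0,1], let D_T be the T×T matrix with entries (D_T)_{ij} = (1−ε)^{|i−j|/2}, and for i = 1,…,m let K^{(i)} denote the i-th N×N diagonal block of K (rows and columns (i−1)N+1 through iN). Then log det(I_T + σ⁻²(K ∘ D_T)) ≤ ∑_{i=1}^m log det(I_N + σ⁻²K^{(i)}) + m·σ⁻²·N³ε. -/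
set_option linter.unusedSectionVars false
set_option maxHeartbeats 1000000

open scoped Matrix BigOperators

/-- The index of the `a`-th row/column of the `i`-th `N×N` diagonal block inside
a `(m·N)×(m·N)` matrix. -/
def blockIdx {m N : ℕ} (i : Fin m) (a : Fin N) : Fin (m * N) :=
  ⟨i.val * N + a.val, by
    calc i.val * N + a.val < i.val * N + N := by omega
      _ = (i.val + 1) * N := by ring
      _ ≤ m * N := Nat.mul_le_mul_right N i.isLt⟩

namespace TVGPAux

variable {ι κ : Type*} [Fintype ι] [DecidableEq ι] [Fintype κ] [DecidableEq κ]


lemma posSemidef_of_real {M : Matrix ι ι ℝ} (h1 : M.IsSymm)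
    (h2 : ∀ x : ι → ℝ, 0 ≤ x ⬝ᵥ M.mulVec x) : M.PosSemidef := by
  refine Matrix.PosSemidef.of_dotProduct_mulVec_nonneg ?_ fun x => ?_
  · ext i j
    rw [Matrix.conjTranspose_apply, star_trivial]
    exact congrFun (congrFun h1 i) j
  · simpa [star_trivial] using h2 x

lemma form_nonneg {M : Matrix ι ι ℝ} (hM : M.PosSemidef) (x : ι → ℝ) :
    0 ≤ x ⬝ᵥ M.mulVec x := by simpa [star_trivial] using hM.dotProduct_mulVec_nonneg x

lemma form_pos {M : Matrix ι ι ℝ} (hM : M.PosDef) {x : ι → ℝ} (hx : x ≠ 0) :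
    0 < x ⬝ᵥ M.mulVec x := by simpa [star_trivial] using hM.dotProduct_mulVec_pos hx

lemma posSemidef_smul {A : Matrix ι ι ℝ} (hA : A.PosSemidef) {c : ℝ} (hc : 0 ≤ c) :
    (c • A).PosSemidef := by
  refine Matrix.PosSemidef.of_dotProduct_mulVec_nonneg ?_ fun x => ?_
  · rw [Matrix.IsHermitian, Matrix.conjTranspose_smul, star_trivial, hA.1.eq]
  · rw [Matrix.smul_mulVec, dotProduct_smul, smul_eq_mul]
    exact mul_nonneg hc (hA.dotProduct_mulVec_nonneg x)

lemma posDef_one_add {A : Matrix ι ι ℝ} (hA : A.PosSemidef) : ((1 : Matrix ι ι ℝ) + A).PosDef :=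
  Matrix.PosDef.add_posSemidef Matrix.PosDef.one hA

lemma posDef_of_det_ne_zero {A : Matrix ι ι ℝ} (hA : A.PosSemidef) (h : A.det ≠ 0) :
    A.PosDef := by
  refine Matrix.PosDef.of_dotProduct_mulVec_pos hA.1 fun x hx => ?_
  rcases lt_or_eq_of_le (hA.dotProduct_mulVec_nonneg x) with h' | h'
  · exact h'
  · exfalso
    have hz : A.mulVec x = 0 := (hA.dotProduct_mulVec_zero_iff x).mp h'.symm
    have hxz : x = 0 := by
      have h0 : A⁻¹ *ᵥ (A *ᵥ x) = 0 := by rw [hz, Matrix.mulVec_zero]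
      rwa [Matrix.mulVec_mulVec, Matrix.nonsing_inv_mul A (isUnit_iff_ne_zero.mpr h),
        Matrix.one_mulVec] at h0
    exact hx hxz

lemma eigenvalue_ge_one {Q : Matrix ι ι ℝ} (hQ : Q.PosSemidef)
    (hHer : ((1 : Matrix ι ι ℝ) + Q).IsHermitian) (i : ι) : 1 ≤ hHer.eigenvalues i := by
  have hv := hHer.eigenvalues_eq i
  set v : ι → ℝ := ⇑(hHer.eigenvectorBasis i) with hvdef
  have hnorm : ‖hHer.eigenvectorBasis i‖ = 1 := hHer.eigenvectorBasis.orthonormal.1 i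
  have hvv : v ⬝ᵥ v = 1 := by
    have h1 : (inner ℝ (hHer.eigenvectorBasis i) (hHer.eigenvectorBasis i) : ℝ) = ∑ j, v j * v j := by
      rw [PiLp.inner_apply]
      simp [hvdef, pow_two]
    have h2 : (inner ℝ (hHer.eigenvectorBasis i) (hHer.eigenvectorBasis i) : ℝ)
        = ‖hHer.eigenvectorBasis i‖ ^ 2 := real_inner_self_eq_norm_sq _
    have : (∑ j, v j * v j) = 1 := by rw [← h1, h2, hnorm]; norm_num
    simpa [dotProduct] using this
  have h1 : hHer.eigenvalues i = v ⬝ᵥ (((1 : Matrix ι ι ℝ) + Q).mulVec v) := by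
    simpa [star_trivial] using hv
  rw [h1, Matrix.add_mulVec, Matrix.one_mulVec, dotProduct_add, hvv]
  have := form_nonneg hQ v
  linarith

lemma one_le_det_one_add {Q : Matrix ι ι ℝ} (hQ : Q.PosSemidef) :
    1 ≤ ((1 : Matrix ι ι ℝ) + Q).det := by
  have hH : ((1 : Matrix ι ι ℝ) + Q).PosSemidef := Matrix.PosSemidef.add Matrix.PosSemidef.one hQ
  have hHer := hH.1
  have hdet : ((1 : Matrix ι ι ℝ) + Q).det = ∏ i, hHer.eigenvalues i := by
    simpa using hHer.det_eq_prod_eigenvalues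
  rw [hdet]
  have h := Finset.prod_le_prod (s := Finset.univ) (f := fun _ : ι => (1 : ℝ))
    (g := fun i => hHer.eigenvalues i) (fun i _ => zero_le_one)
    (fun i _ => eigenvalue_ge_one hQ hHer i)
  simpa using h

open scoped MatrixOrder in
lemma det_le_det_add {X P : Matrix ι ι ℝ} (hX : X.PosDef) (hP : P.PosSemidef) :
    X.det ≤ (X + P).det := by
  set S := CFC.sqrt X with hSdef
  have hS : S.PosSemidef := Matrix.nonneg_iff_posSemidef.mp (CFC.sqrt_nonneg X)
  have hSS : S * S = X := CFC.sqrt_mul_sqrt_self X (Matrix.nonneg_iff_posSemidef.mpr hX.posSemidef)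
  have hdetX : X.det = S.det * S.det := by rw [← hSS, Matrix.det_mul]
  have hdX : 0 < X.det := hX.det_pos
  have hdS : IsUnit S.det := by
    rw [isUnit_iff_ne_zero]
    intro h
    rw [hdetX, h, mul_zero] at hdX
    exact lt_irrefl _ hdX
  have hinv1 : S * S⁻¹ = 1 := Matrix.mul_nonsing_inv S hdS
  have hinv2 : S⁻¹ * S = 1 := Matrix.nonsing_inv_mul S hdS
  have hQ : (S⁻¹ * P * S⁻¹).PosSemidef := by
    have h := hP.conjTranspose_mul_mul_same (B := S⁻¹)
    rwa [hS.isHermitian.inv.eq] at h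
  have key : X + P = S * ((1 : Matrix ι ι ℝ) + S⁻¹ * P * S⁻¹) * S := by
    rw [Matrix.mul_add, Matrix.mul_one, Matrix.add_mul, hSS]
    congr 1
    calc P = S * S⁻¹ * P * (S⁻¹ * S) := by
          rw [hinv1, hinv2, Matrix.one_mul, Matrix.mul_one]
      _ = S * (S⁻¹ * P * S⁻¹) * S := by simp only [Matrix.mul_assoc]
  rw [key, Matrix.det_mul, Matrix.det_mul, hdetX]
  have h1 : 1 ≤ ((1 : Matrix ι ι ℝ) + S⁻¹ * P * S⁻¹).det := one_le_det_one_add hQ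
  have h2 : 0 < S.det * S.det := by rw [← hdetX]; exact hdX
  nlinarith [h2, h1]




lemma posDef_submatrix {M : Matrix ι ι ℝ} (hM : M.PosDef) {f : κ → ι}
    (hf : Function.Injective f) : (M.submatrix f f).PosDef := by
  refine Matrix.PosDef.of_dotProduct_mulVec_pos ?_ fun x hx => ?_
  · ext a b
    rw [Matrix.conjTranspose_apply, Matrix.submatrix_apply, Matrix.submatrix_apply, star_trivial]
    have := congrFun (congrFun hM.1.eq (f a)) (f b)
    rw [Matrix.conjTranspose_apply, star_trivial] at this
    exact this
  · classical
    set y : ι → ℝ := fun i => ∑ a, if f a = i then x a else 0 with hy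
    have hyg : ∀ g : ι → ℝ, (∑ i, y i * g i) = ∑ a, x a * g (f a) := by
      intro g
      simp only [hy, Finset.sum_mul]
      rw [Finset.sum_comm]
      refine Finset.sum_congr rfl fun a _ => ?_
      simp [ite_mul]
    have hyform : y ⬝ᵥ M.mulVec y = x ⬝ᵥ (M.submatrix f f).mulVec x := by
      rw [dotProduct, dotProduct]
      rw [hyg fun i => M.mulVec y i]
      refine Finset.sum_congr rfl fun a _ => ?_
      congr 1
      rw [Matrix.mulVec, Matrix.mulVec, dotProduct, dotProduct]
      have : ∀ j, M (f a) j * y j = y j * M (f a) j := fun j => mul_comm _ _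
      rw [Finset.sum_congr rfl fun j _ => this j, hyg fun j => M (f a) j]
      refine Finset.sum_congr rfl fun b _ => ?_
      rw [Matrix.submatrix_apply, mul_comm]
    have hyne : y ≠ 0 := by
      obtain ⟨a₀, ha₀⟩ := Function.ne_iff.mp hx
      intro h0
      apply ha₀
      have : y (f a₀) = x a₀ := by
        simp only [hy]
        rw [Finset.sum_eq_single a₀]
        · simp
        · intro b _ hb
          simp [hf.ne hb]
        · simp
      rw [h0] at this
      simpa using this.symm
    have := hM.dotProduct_mulVec_pos hyne
    rw [star_trivial] at this
    rw [star_trivial, ← hyform]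
    exact this

lemma fischer_sum {M : Matrix (ι ⊕ κ) (ι ⊕ κ) ℝ} (hM : M.PosDef) :
    M.det ≤ (M.toBlocks₁₁).det * (M.toBlocks₂₂).det := by
  classical
  set A := M.toBlocks₁₁ with hA_def
  set B := M.toBlocks₁₂ with hB_def
  set Dm := M.toBlocks₂₂ with hD_def
  have hC : M.toBlocks₂₁ = Bᴴ := by
    ext i j
    have := congrFun (congrFun hM.1.eq (Sum.inr i)) (Sum.inl j)
    rw [Matrix.conjTranspose_apply, star_trivial] at this
    simpa [hB_def, Matrix.toBlocks₂₁, Matrix.toBlocks₁₂, Matrix.conjTranspose_apply] using this.symm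
  have hMblocks : M = Matrix.fromBlocks A B Bᴴ Dm := by
    rw [← hC, hA_def, hB_def, hD_def]
    exact (Matrix.fromBlocks_toBlocks M).symm
  have hA : A.PosDef := posDef_submatrix hM Sum.inl_injective
  have hDm : Dm.PosDef := posDef_submatrix hM Sum.inr_injective
  haveI : Invertible A := A.invertibleOfIsUnitDet (isUnit_iff_ne_zero.mpr hA.det_pos.ne')
  have hdet : M.det = A.det * (Dm - Bᴴ * A⁻¹ * B).det := by
    rw [hMblocks, Matrix.det_fromBlocks₁₁, Matrix.invOf_eq_nonsing_inv]
  have hSchur : (Dm - Bᴴ * A⁻¹ * B).PosSemidef := by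
    have hpsd : (Matrix.fromBlocks A B Bᴴ Dm).PosSemidef := hMblocks ▸ hM.posSemidef
    exact (Matrix.PosDef.fromBlocks₁₁ B Dm hA).mp hpsd
  have hBAB : (Bᴴ * A⁻¹ * B).PosSemidef := (hA.inv.posSemidef).conjTranspose_mul_mul_same B
  have hdS : (Dm - Bᴴ * A⁻¹ * B).det ≠ 0 := by
    intro h0
    rw [h0, mul_zero] at hdet
    exact hM.det_pos.ne' hdet
  have hSpd : (Dm - Bᴴ * A⁻¹ * B).PosDef := posDef_of_det_ne_zero hSchur hdS
  have hmono : (Dm - Bᴴ * A⁻¹ * B).det ≤ Dm.det := by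
    have := det_le_det_add hSpd hBAB
    rwa [sub_add_cancel] at this
  rw [hdet]
  exact mul_le_mul_of_nonneg_left hmono hA.det_pos.le

def succEquiv (m N : ℕ) : (Fin N ⊕ (Fin m × Fin N)) ≃ (Fin (m+1) × Fin N) where
  toFun x := Sum.elim (fun a => ((0 : Fin (m+1)), a)) (fun p => (p.1.succ, p.2)) x
  invFun p := Fin.cases (Sum.inl p.2) (fun j => Sum.inr (j, p.2)) p.1
  left_inv x := by rcases x with a | ⟨i, a⟩ <;> simp
  right_inv p := by
    rcases p with ⟨i, a⟩
    induction i using Fin.cases <;> simp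

lemma fischer_blocks (N : ℕ) : ∀ (m : ℕ) (M : Matrix (Fin m × Fin N) (Fin m × Fin N) ℝ),
    M.PosDef →
    M.det ≤ ∏ i : Fin m, (M.submatrix (fun a => (i, a)) (fun a => (i, a))).det := by
  intro m
  induction m with
  | zero =>
    intro M hM
    haveI : IsEmpty (Fin 0 × Fin N) := by infer_instance
    simp [Matrix.det_isEmpty]
  | succ m ih =>
    intro M hM
    set e := succEquiv m N with he_def
    have hdet : (M.submatrix e e).det = M.det := Matrix.det_submatrix_equiv_self e M
    have hM' : (M.submatrix e e).PosDef := posDef_submatrix hM e.injective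
    have h1 := fischer_sum hM'
    have hb1 : (M.submatrix e e).toBlocks₁₁
        = M.submatrix (fun a : Fin N => ((0 : Fin (m+1)), a)) (fun a => (0, a)) := rfl
    have hb2 : (M.submatrix e e).toBlocks₂₂
        = M.submatrix (fun p : Fin m × Fin N => (p.1.succ, p.2))
            (fun p => (p.1.succ, p.2)) := rfl
    have hinj : Function.Injective (fun p : Fin m × Fin N => (p.1.succ, p.2)) := by
      intro p q h
      simp only [Prod.mk.injEq] at h
      exact Prod.ext (Fin.succ_injective _ h.1) h.2
    have hM2 : (M.submatrix (fun p : Fin m × Fin N => (p.1.succ, p.2))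
        (fun p => (p.1.succ, p.2))).PosDef := posDef_submatrix hM hinj
    have h2 := ih _ hM2
    have hb0pd : (M.submatrix (fun a : Fin N => ((0 : Fin (m+1)), a)) (fun a => (0, a))).PosDef :=
      posDef_submatrix hM (by intro a b h; simpa [Prod.mk.injEq] using h)
    have hcomp : ∀ i : Fin m,
        ((M.submatrix (fun p : Fin m × Fin N => (p.1.succ, p.2))
          (fun p => (p.1.succ, p.2))).submatrix (fun a : Fin N => (i, a)) (fun a => (i, a)))
        = M.submatrix (fun a : Fin N => (i.succ, a)) (fun a => (i.succ, a)) := by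
      intro i; rfl
    calc M.det = (M.submatrix e e).det := hdet.symm
      _ ≤ ((M.submatrix e e).toBlocks₁₁).det * ((M.submatrix e e).toBlocks₂₂).det := h1
      _ ≤ ((M.submatrix e e).toBlocks₁₁).det
            * ∏ i : Fin m, (M.submatrix (fun a : Fin N => (i.succ, a))
                (fun a => (i.succ, a))).det := by
          rw [hb2]
          refine mul_le_mul_of_nonneg_left ?_ (by rw [hb1]; exact hb0pd.det_pos.le)
          exact h2.trans (le_of_eq (Finset.prod_congr rfl fun i _ => by rw [hcomp]))
      _ = ∏ i : Fin (m+1), (M.submatrix (fun a : Fin N => (i, a)) (fun a => (i, a))).det := by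
          rw [Fin.prod_univ_succ, hb1]



lemma geom_aux (r : ℝ) : ∀ (n t : ℕ), n ≤ t →
    ∑ k ∈ Finset.range n, r ^ (n - (k+1)) * r ^ (t - (k+1)) * (1 - r^2)
      = r ^ (t - n) - r ^ (t + n) := by
  intro n
  induction n with
  | zero => intro t _; simp
  | succ n ih =>
    intro t ht
    obtain ⟨t', rfl⟩ : ∃ t', t = t' + 1 := ⟨t - 1, by omega⟩
    rw [Finset.sum_range_succ']
    have h1 : ∀ k ∈ Finset.range n,
        r ^ (n + 1 - (k + 1 + 1)) * r ^ (t' + 1 - (k + 1 + 1)) * (1 - r^2)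
          = r ^ (n - (k+1)) * r ^ (t' - (k+1)) * (1 - r^2) := by
      intro k hk
      have e1 : n + 1 - (k + 1 + 1) = n - (k+1) := by omega
      have e2 : t' + 1 - (k + 1 + 1) = t' - (k+1) := by omega
      rw [e1, e2]
    rw [Finset.sum_congr rfl h1, ih t' (by omega)]
    have e1 : n + 1 - 1 = n := by omega
    have e2 : t' + 1 - 1 = t' := by omega
    have e3 : t' + 1 - (n+1) = t' - n := by omega
    have e4 : t' + 1 + (n+1) = (t' + n) + 2 := by omega
    rw [e1, e2, e3, e4]
    have e5 : r ^ n * r ^ t' = r ^ (t' + n) := by rw [← pow_add, add_comm]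
    have e6 : r ^ (t' + n + 2) = r ^ (t' + n) * r ^ 2 := by rw [← pow_add]
    rw [e6]
    nlinarith [e5]

/-- Gram-vector entries for the KMS matrix. -/
noncomputable def Lnat (r c : ℝ) (t k : ℕ) : ℝ :=
  if k = 0 then r ^ t else if k ≤ t then r ^ (t - k) * c else 0

lemma gram_sum (r : ℝ) (hr0 : 0 ≤ r) (hr1 : r ≤ 1) (T : ℕ) (s t : ℕ)
    (hst : s ≤ t) (hT : s < T) :
    ∑ k ∈ Finset.range T, Lnat r (Real.sqrt (1 - r^2)) s k * Lnat r (Real.sqrt (1 - r^2)) t k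
      = r ^ (t - s) := by
  set c := Real.sqrt (1 - r^2) with hc
  have hc2 : c * c = 1 - r^2 := Real.mul_self_sqrt (by nlinarith)
  have hsub : Finset.range (s+1) ⊆ Finset.range T := by
    intro k hk
    simp only [Finset.mem_range] at *
    omega
  have hzero : ∀ k ∈ Finset.range T, k ∉ Finset.range (s+1) →
      Lnat r c s k * Lnat r c t k = 0 := by
    intro k _ hk
    simp only [Finset.mem_range, not_lt] at hk
    have h1 : Lnat r c s k = 0 := by
      unfold Lnat
      rw [if_neg (by omega), if_neg (by omega)]
    rw [h1, zero_mul]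
  rw [← Finset.sum_subset hsub hzero, Finset.sum_range_succ']
  have hf0 : Lnat r c s 0 * Lnat r c t 0 = r ^ s * r ^ t := by unfold Lnat; simp
  have hfk : ∀ k ∈ Finset.range s, Lnat r c s (k+1) * Lnat r c t (k+1)
      = r ^ (s - (k+1)) * r ^ (t - (k+1)) * (1 - r^2) := by
    intro k hk
    simp only [Finset.mem_range] at hk
    unfold Lnat
    have h1 : ¬(k + 1 = 0) := by omega
    have h2 : k + 1 ≤ s := by omega
    have h3 : k + 1 ≤ t := by omega
    rw [if_neg h1, if_pos h2, if_neg h1, if_pos h3]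
    calc r ^ (s - (k+1)) * c * (r ^ (t - (k+1)) * c)
        = r ^ (s - (k+1)) * r ^ (t - (k+1)) * (c * c) := by ring
      _ = r ^ (s - (k+1)) * r ^ (t - (k+1)) * (1 - r^2) := by rw [hc2]
  rw [Finset.sum_congr rfl hfk, geom_aux r s t hst, hf0]
  have e5 : r ^ s * r ^ t = r ^ (t + s) := by rw [← pow_add, add_comm]
  rw [e5]
  ring

lemma one_sub_le_rpow {ε : ℝ} (hε0 : 0 ≤ ε) (hε1 : ε ≤ 1) {x : ℝ} (hx : 0 ≤ x)
    {n : ℕ} (hxn : x ≤ n) : 1 - n * ε ≤ (1 - ε) ^ x := by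
  rcases le_or_gt (1 - (n : ℝ) * ε) 0 with h | h
  · exact h.trans (Real.rpow_nonneg (by linarith) x)
  · rcases Nat.eq_zero_or_pos n with rfl | hn
    · have hx0 : x = 0 := le_antisymm (by simpa using hxn) hx
      simp [hx0]
    · have hε' : ε < 1 := by
        by_contra h'
        push_neg at h'
        have h1 : (1 : ℝ) ≤ (n : ℝ) := by exact_mod_cast hn
        nlinarith
      have h1 : (1 - ε) ^ (n : ℝ) ≤ (1 - ε) ^ x :=
        Real.rpow_le_rpow_of_exponent_ge (by linarith) (by linarith) hxn
      have h2 : (1 : ℝ) - n * ε ≤ (1 - ε) ^ n := by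
        have hb := one_add_mul_le_pow (show (-2 : ℝ) ≤ -ε by linarith) n
        have e : (1 : ℝ) + (n : ℝ) * (-ε) = 1 - n * ε := by ring
        rw [e] at hb
        simpa [sub_eq_add_neg] using hb
      calc (1 : ℝ) - n * ε ≤ (1 - ε) ^ n := h2
        _ = (1 - ε) ^ (n : ℝ) := (Real.rpow_natCast _ n).symm
        _ ≤ (1 - ε) ^ x := h1

lemma form_le_of_entries {E : Matrix ι ι ℝ} {δ : ℝ} (hδ : 0 ≤ δ)
    (hE : ∀ a b, |E a b| ≤ δ) (x : ι → ℝ) :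
    x ⬝ᵥ E.mulVec x ≤ (Fintype.card ι : ℝ) * δ * (x ⬝ᵥ x) := by
  have h1 : x ⬝ᵥ E.mulVec x ≤ ∑ a, ∑ b, |x a| * |x b| * δ := by
    rw [dotProduct]
    refine Finset.sum_le_sum fun a _ => ?_
    rw [Matrix.mulVec, dotProduct, Finset.mul_sum]
    refine Finset.sum_le_sum fun b _ => ?_
    calc x a * (E a b * x b) ≤ |x a * (E a b * x b)| := le_abs_self _
      _ = |x a| * |E a b| * |x b| := by rw [abs_mul, abs_mul]; ring
      _ ≤ |x a| * δ * |x b| := by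
          have h := hE a b
          have h0a := abs_nonneg (x a)
          have h0b := abs_nonneg (x b)
          exact mul_le_mul_of_nonneg_right (mul_le_mul_of_nonneg_left h h0a) h0b
      _ = |x a| * |x b| * δ := by ring
  have h2 : ∑ a, ∑ b, |x a| * |x b| * δ = (∑ a, |x a|) ^ 2 * δ := by
    rw [sq, Finset.sum_mul_sum, Finset.sum_mul]
    refine Finset.sum_congr rfl fun a _ => ?_
    rw [Finset.sum_mul]
  have h3 : (∑ a, |x a|) ^ 2 ≤ (Fintype.card ι : ℝ) * ∑ a, |x a| ^ 2 := by
    have := sq_sum_le_card_mul_sum_sq (s := (Finset.univ : Finset ι)) (f := fun a => |x a|)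
    simpa [Finset.card_univ] using this
  have h4 : ∑ a, |x a| ^ 2 = x ⬝ᵥ x := by
    rw [dotProduct]
    refine Finset.sum_congr rfl fun a _ => ?_
    rw [sq_abs, sq]
  calc x ⬝ᵥ E.mulVec x ≤ (∑ a, |x a|) ^ 2 * δ := by rw [← h2]; exact h1
    _ ≤ ((Fintype.card ι : ℝ) * ∑ a, |x a| ^ 2) * δ := by
        exact mul_le_mul_of_nonneg_right h3 hδ
    _ = (Fintype.card ι : ℝ) * δ * (x ⬝ᵥ x) := by rw [h4]; ring



lemma hadamard_form (K Dm : Matrix ι ι ℝ) (L : Matrix ι ι ℝ)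
    (hL : ∀ s t, Dm s t = ∑ k, L s k * L t k) (x : ι → ℝ) :
    x ⬝ᵥ (Matrix.of fun i j => K i j * Dm i j).mulVec x
      = ∑ k, (fun s => x s * L s k) ⬝ᵥ K.mulVec (fun s => x s * L s k) := by
  have lhs_eq : x ⬝ᵥ (Matrix.of fun i j => K i j * Dm i j).mulVec x
      = ∑ s, ∑ t, ∑ k, (x s * L s k) * K s t * (x t * L t k) := by
    rw [dotProduct]
    refine Finset.sum_congr rfl fun s _ => ?_
    rw [Matrix.mulVec, dotProduct, Finset.mul_sum]
    refine Finset.sum_congr rfl fun t _ => ?_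
    have h : x s * (Matrix.of fun i j => K i j * Dm i j) s t * x t
        = Dm s t * (x s * (K s t * x t)) := by
      simp only [Matrix.of_apply]; ring
    rw [show x s * ((Matrix.of fun i j => K i j * Dm i j) s t * x t)
        = Dm s t * (x s * (K s t * x t)) from by simp only [Matrix.of_apply]; ring,
      hL s t, Finset.sum_mul]
    exact Finset.sum_congr rfl fun k _ => by ring
  have rhs_eq : (∑ k, (fun s => x s * L s k) ⬝ᵥ K.mulVec (fun s => x s * L s k))
      = ∑ s, ∑ t, ∑ k, (x s * L s k) * K s t * (x t * L t k) := by
    rw [show (∑ k, (fun s => x s * L s k) ⬝ᵥ K.mulVec (fun s => x s * L s k))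
        = ∑ k, ∑ s, ∑ t, (x s * L s k) * K s t * (x t * L t k) from ?_]
    · rw [Finset.sum_comm]
      exact Finset.sum_congr rfl fun s _ => Finset.sum_comm
    · refine Finset.sum_congr rfl fun k _ => ?_
      rw [dotProduct]
      refine Finset.sum_congr rfl fun s _ => ?_
      rw [Matrix.mulVec, dotProduct, Finset.mul_sum]
      exact Finset.sum_congr rfl fun t _ => by ring
  rw [lhs_eq, rhs_eq]

lemma submatrix_one_add (A : Matrix ι ι ℝ) {f : κ → ι} (hf : Function.Injective f) (c : ℝ) :
    (((1 : Matrix ι ι ℝ) + c • A).submatrix f f)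
      = (1 : Matrix κ κ ℝ) + c • A.submatrix f f := by
  ext a b
  by_cases h : a = b
  · subst h
    simp [Matrix.one_apply]
  · simp [Matrix.one_apply, h, hf.ne h]

lemma block_step {N : ℕ} {c δ : ℝ} (hc : 0 < c) (hδ : 0 ≤ δ)
    {A B : Matrix (Fin N) (Fin N) ℝ} (hA : A.PosSemidef) (hB : B.PosSemidef)
    (hAB : ∀ a b, |A a b - B a b| ≤ δ) :
    Real.log ((1 : Matrix (Fin N) (Fin N) ℝ) + c • A).det
      ≤ Real.log ((1 : Matrix (Fin N) (Fin N) ℝ) + c • B).det + c * (N:ℝ)^2 * δ := by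
  set X := (1 : Matrix (Fin N) (Fin N) ℝ) + c • A with hXdef
  set Y := (1 : Matrix (Fin N) (Fin N) ℝ) + c • B with hYdef
  have hXpd : X.PosDef := posDef_one_add (posSemidef_smul hA hc.le)
  have hYpd : Y.PosDef := posDef_one_add (posSemidef_smul hB hc.le)
  set u : ℝ := c * (N:ℝ) * δ with hu
  have hu0 : 0 ≤ u := by positivity
  have hP : ((1 + u) • Y - X).PosSemidef := by
    refine Matrix.PosSemidef.of_dotProduct_mulVec_nonneg ?_ fun x => ?_
    · have hXh : X.IsHermitian := hXpd.1
      have hYh : Y.IsHermitian := hYpd.1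
      rw [Matrix.IsHermitian, Matrix.conjTranspose_sub, Matrix.conjTranspose_smul,
        star_trivial, hYh.eq, hXh.eq]
    · rw [star_trivial]
      have hexp : x ⬝ᵥ ((1 + u) • Y - X).mulVec x
          = (1 + u) * (x ⬝ᵥ Y.mulVec x) - x ⬝ᵥ X.mulVec x := by
        rw [Matrix.sub_mulVec, dotProduct_sub, Matrix.smul_mulVec,
          dotProduct_smul, smul_eq_mul]
      rw [hexp]
      have hYX : x ⬝ᵥ Y.mulVec x - x ⬝ᵥ X.mulVec x = - (c * (x ⬝ᵥ (A - B).mulVec x)) := by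
        rw [hXdef, hYdef]
        rw [Matrix.add_mulVec, Matrix.add_mulVec, dotProduct_add, dotProduct_add,
          Matrix.sub_mulVec, dotProduct_sub,
          Matrix.smul_mulVec, Matrix.smul_mulVec,
          dotProduct_smul, dotProduct_smul, smul_eq_mul, smul_eq_mul]
        ring
      have hEb : x ⬝ᵥ (A - B).mulVec x ≤ (N:ℝ) * δ * (x ⬝ᵥ x) := by
        have := form_le_of_entries (E := A - B) hδ (fun a b => by
          simpa [Matrix.sub_apply] using hAB a b) x
        simpa [Fintype.card_fin] using this
      have hxx : x ⬝ᵥ x ≤ x ⬝ᵥ Y.mulVec x := by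
        have h1 : x ⬝ᵥ Y.mulVec x = x ⬝ᵥ x + c * (x ⬝ᵥ B.mulVec x) := by
          rw [hYdef, Matrix.add_mulVec, dotProduct_add, Matrix.one_mulVec,
            Matrix.smul_mulVec, dotProduct_smul, smul_eq_mul]
        have h2 := form_nonneg hB x
        nlinarith
      have : (1 + u) * (x ⬝ᵥ Y.mulVec x) - x ⬝ᵥ X.mulVec x
          = u * (x ⬝ᵥ Y.mulVec x) - c * (x ⬝ᵥ (A - B).mulVec x) := by
        have := hYX
        ring_nf
        ring_nf at this
        linarith
      rw [this]
      have h5 : c * (x ⬝ᵥ (A - B).mulVec x) ≤ c * ((N:ℝ) * δ * (x ⬝ᵥ x)) :=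
        mul_le_mul_of_nonneg_left hEb hc.le
      have h6 : u * (x ⬝ᵥ x) ≤ u * (x ⬝ᵥ Y.mulVec x) := mul_le_mul_of_nonneg_left hxx hu0
      have h7 : c * ((N:ℝ) * δ * (x ⬝ᵥ x)) = u * (x ⬝ᵥ x) := by rw [hu]; ring
      linarith
  have hdet1 : X.det ≤ ((1 + u) • Y).det := by
    have h := det_le_det_add hXpd hP
    rwa [add_sub_cancel] at h
  have hdet2 : ((1 + u) • Y).det = (1 + u) ^ N * Y.det := by
    rw [Matrix.det_smul, Fintype.card_fin]
  have hYdetpos : 0 < Y.det := hYpd.det_pos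
  have hXdetpos : 0 < X.det := hXpd.det_pos
  have h1u : (0:ℝ) < 1 + u := by linarith
  calc Real.log X.det ≤ Real.log ((1 + u) ^ N * Y.det) := by
        refine Real.log_le_log hXdetpos ?_
        rw [← hdet2]; exact hdet1
    _ = (N:ℝ) * Real.log (1 + u) + Real.log Y.det := by
        rw [Real.log_mul (by positivity) hYdetpos.ne', Real.log_pow]
    _ ≤ (N:ℝ) * u + Real.log Y.det := by
        have hlog : Real.log (1 + u) ≤ u := by
          have := Real.log_le_sub_one_of_pos h1u
          simpa using this
        have : (N:ℝ) * Real.log (1+u) ≤ (N:ℝ) * u :=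
          mul_le_mul_of_nonneg_left hlog (Nat.cast_nonneg N)
        linarith
    _ = Real.log Y.det + c * (N:ℝ)^2 * δ := by rw [hu]; ring


end TVGPAux
/-- Key mutual-information bound for TV-GP-UCB in matrix form:
`log det(I_T + σ⁻²(K ∘ D_T)) ≤ ∑ᵢ log det(I_N + σ⁻²K⁽ⁱ⁾) + m·σ⁻²·N³·ε`,
where `D_T` has entries `(1-ε)^(|i-j|/2)`, `T = mN`, and `K⁽ⁱ⁾` are the diagonal blocks. -/
theorem log_det_hadamard_discount_le_sum_blocks
    (N m : ℕ) (hN : 1 ≤ N) (hm : 1 ≤ m)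
    (ε : ℝ) (hε0 : 0 ≤ ε) (hε1 : ε ≤ 1) (σ : ℝ) (hσ : 0 < σ)
    (K : Matrix (Fin (m * N)) (Fin (m * N)) ℝ)
    (h_symm : K.IsSymm) (h_psd : ∀ x : Fin (m * N) → ℝ, 0 ≤ x ⬝ᵥ K.mulVec x)
    (h_entries : ∀ i j, K i j ∈ Set.Icc (0 : ℝ) 1)
    (D : Matrix (Fin (m * N)) (Fin (m * N)) ℝ)
    (hD : ∀ i j, D i j = (1 - ε) ^ ((|(i : ℝ) - (j : ℝ)|) / 2)) :
    Real.log (1 + (σ ^ 2)⁻¹ • (Matrix.of fun i j => K i j * D i j)).det ≤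
      (∑ i : Fin m,
        Real.log (1 + (σ ^ 2)⁻¹ •
          (Matrix.of fun a b : Fin N => K (blockIdx i a) (blockIdx i b))).det)
        + m * (σ ^ 2)⁻¹ * N ^ 3 * ε := by
  classical
  set c : ℝ := (σ ^ 2)⁻¹ with hc_def
  have hc : 0 < c := by positivity
  set KD : Matrix (Fin (m * N)) (Fin (m * N)) ℝ := Matrix.of fun i j => K i j * D i j with hKD_def
  -- basic facts about D
  have h1ε : (0:ℝ) ≤ 1 - ε := by linarith
  set r : ℝ := Real.sqrt (1 - ε) with hr_def
  have hr0 : 0 ≤ r := Real.sqrt_nonneg _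
  have hr1 : r ≤ 1 := Real.sqrt_le_one.mpr (by linarith)
  have hr2 : 1 - r ^ 2 = ε := by rw [hr_def, Real.sq_sqrt h1ε]; ring
  have hDsymm : ∀ i j, D i j = D j i := by
    intro i j; rw [hD, hD, abs_sub_comm]
  have hD0 : ∀ i j, 0 ≤ D i j := by
    intro i j; rw [hD]; exact Real.rpow_nonneg h1ε _
  have hD1 : ∀ i j, D i j ≤ 1 := by
    intro i j; rw [hD]
    exact Real.rpow_le_one h1ε (by linarith) (by positivity)
  -- D in geometric form
  have hDr : ∀ s t : Fin (m * N), s.val ≤ t.val → D s t = r ^ (t.val - s.val) := by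
    intro s t hst
    rw [hD]
    have habs : |(s : ℝ) - (t : ℝ)| = ((t.val - s.val : ℕ) : ℝ) := by
      rw [abs_sub_comm, abs_of_nonneg (by
        have : (s.val : ℝ) ≤ (t.val : ℝ) := by exact_mod_cast hst
        linarith), Nat.cast_sub hst]
    rw [habs]
    set n : ℕ := t.val - s.val with hn
    have h2 : ((n : ℝ)) / 2 = (1/2 : ℝ) * (n : ℝ) := by ring
    rw [h2, Real.rpow_mul h1ε, Real.rpow_natCast]
    congr 1
    rw [hr_def, Real.sqrt_eq_rpow]
  -- Gram decomposition of D
  set L : Matrix (Fin (m * N)) (Fin (m * N)) ℝ :=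
    Matrix.of fun t k => TVGPAux.Lnat r (Real.sqrt (1 - r ^ 2)) t.val k.val with hL_def
  have hL : ∀ s t, D s t = ∑ k, L s k * L t k := by
    have key : ∀ s t : Fin (m * N), s.val ≤ t.val → D s t = ∑ k, L s k * L t k := by
      intro s t hst
      rw [hDr s t hst]
      have := TVGPAux.gram_sum r hr0 hr1 (m * N) s.val t.val hst s.isLt
      rw [← this]
      exact (Fin.sum_univ_eq_sum_range
        (fun k => TVGPAux.Lnat r (Real.sqrt (1 - r ^ 2)) s.val k
          * TVGPAux.Lnat r (Real.sqrt (1 - r ^ 2)) t.val k) (m * N)).symm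
    intro s t
    rcases le_total s.val t.val with h | h
    · exact key s t h
    · rw [hDsymm s t, key t s h]
      exact Finset.sum_congr rfl fun k _ => mul_comm _ _
  -- KD is PSD
  have hKDsymm : KD.IsSymm := by
    ext i j
    rw [Matrix.transpose_apply]
    show K j i * D j i = K i j * D i j
    have hk : K j i = K i j := by
      have := congrFun (congrFun h_symm i) j
      rw [Matrix.transpose_apply] at this
      exact this
    rw [hk, hDsymm j i]
  have hKD_psd : KD.PosSemidef := by
    refine TVGPAux.posSemidef_of_real hKDsymm fun x => ?_
    rw [hKD_def, TVGPAux.hadamard_form K D L hL x]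
    exact Finset.sum_nonneg fun k _ => h_psd _
  -- the full matrix and the reindexing
  set Mfull : Matrix (Fin (m * N)) (Fin (m * N)) ℝ := 1 + c • KD with hMfull_def
  have hMfull_pd : Mfull.PosDef :=
    TVGPAux.posDef_one_add (TVGPAux.posSemidef_smul hKD_psd hc.le)
  set e : Fin m × Fin N ≃ Fin (m * N) := finProdFinEquiv with he_def
  have he : ∀ (i : Fin m) (a : Fin N), e (i, a) = blockIdx i a := by
    intro i a
    apply Fin.val_injective
    show (finProdFinEquiv (i, a) : Fin (m*N)).val = i.val * N + a.val
    simp [finProdFinEquiv]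
    ring
  have hbinj : ∀ i : Fin m, Function.Injective (blockIdx (m := m) (N := N) i) := by
    intro i a b h
    have hval := congrArg Fin.val h
    simp only [blockIdx] at hval
    exact Fin.val_injective (by omega)
  -- Fischer step
  have hM' : (Mfull.submatrix e e).PosDef := TVGPAux.posDef_submatrix hMfull_pd e.injective
  have hfis := TVGPAux.fischer_blocks N m (Mfull.submatrix e e) hM'
  have hblock : ∀ i : Fin m,
      ((Mfull.submatrix e e).submatrix (fun a : Fin N => (i, a)) (fun a => (i, a)))
        = (1 : Matrix (Fin N) (Fin N) ℝ) + c • KD.submatrix (blockIdx i) (blockIdx i) := by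
    intro i
    rw [Matrix.submatrix_submatrix]
    have hfe : (⇑e ∘ fun a : Fin N => (i, a)) = blockIdx i := funext fun a => he i a
    rw [hfe, hMfull_def, TVGPAux.submatrix_one_add KD (hbinj i) c]
  have hdet_le : Mfull.det
      ≤ ∏ i : Fin m, ((1 : Matrix (Fin N) (Fin N) ℝ)
          + c • KD.submatrix (blockIdx i) (blockIdx i)).det := by
    have h1 : Mfull.det = (Mfull.submatrix e e).det :=
      (Matrix.det_submatrix_equiv_self e Mfull).symm
    rw [h1]
    exact hfis.trans (le_of_eq (Finset.prod_congr rfl fun i _ => by rw [hblock i]))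
  -- per block positivity
  have hApd : ∀ i : Fin m, ((1 : Matrix (Fin N) (Fin N) ℝ)
      + c • KD.submatrix (blockIdx i) (blockIdx i)).PosDef := fun i =>
    TVGPAux.posDef_one_add (TVGPAux.posSemidef_smul (hKD_psd.submatrix _) hc.le)
  have hBpd : ∀ i : Fin m, ((1 : Matrix (Fin N) (Fin N) ℝ)
      + c • K.submatrix (blockIdx i) (blockIdx i)).PosDef := fun i =>
    TVGPAux.posDef_one_add (TVGPAux.posSemidef_smul
      ((TVGPAux.posSemidef_of_real h_symm h_psd).submatrix _) hc.le)
  -- entrywise bound inside each block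
  have hentry : ∀ (i : Fin m) (a b : Fin N),
      |KD.submatrix (blockIdx i) (blockIdx i) a b
        - K.submatrix (blockIdx i) (blockIdx i) a b| ≤ (N : ℝ) * ε := by
    intro i a b
    have hg : ((blockIdx i a : Fin (m * N)) : ℝ) - ((blockIdx i b : Fin (m * N)) : ℝ)
        = (a : ℝ) - (b : ℝ) := by
      show ((i.val * N + a.val : ℕ) : ℝ) - ((i.val * N + b.val : ℕ) : ℝ) = _
      push_cast
      ring
    have hDb : D (blockIdx i a) (blockIdx i b) = (1 - ε) ^ ((|(a : ℝ) - (b : ℝ)|) / 2) := by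
      rw [hD, hg]
    have hxN : (|(a : ℝ) - (b : ℝ)|) / 2 ≤ (N : ℕ) := by
      have ha : (a : ℝ) < N := by exact_mod_cast a.isLt
      have hb : (b : ℝ) < N := by exact_mod_cast b.isLt
      have ha0 : (0:ℝ) ≤ (a : ℝ) := by positivity
      have hb0 : (0:ℝ) ≤ (b : ℝ) := by positivity
      have : |(a : ℝ) - (b : ℝ)| ≤ (N : ℝ) := abs_le.mpr ⟨by linarith, by linarith⟩
      linarith
    have hone_sub : 1 - (N : ℝ) * ε ≤ D (blockIdx i a) (blockIdx i b) := by
      rw [hDb]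
      exact TVGPAux.one_sub_le_rpow hε0 hε1 (by positivity) hxN
    have hDle : D (blockIdx i a) (blockIdx i b) ≤ 1 := hD1 _ _
    have hD0' : 0 ≤ D (blockIdx i a) (blockIdx i b) := hD0 _ _
    obtain ⟨hK0, hK1⟩ := h_entries (blockIdx i a) (blockIdx i b)
    have hval : KD.submatrix (blockIdx i) (blockIdx i) a b
        - K.submatrix (blockIdx i) (blockIdx i) a b
        = K (blockIdx i a) (blockIdx i b) * (D (blockIdx i a) (blockIdx i b) - 1) := by
      show K (blockIdx i a) (blockIdx i b) * D (blockIdx i a) (blockIdx i b)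
        - K (blockIdx i a) (blockIdx i b) = _
      ring
    rw [hval]
    rw [abs_le]
    constructor
    · nlinarith
    · nlinarith
  -- per block log bound
  have hstep : ∀ i : Fin m,
      Real.log ((1 : Matrix (Fin N) (Fin N) ℝ)
        + c • KD.submatrix (blockIdx i) (blockIdx i)).det
      ≤ Real.log ((1 : Matrix (Fin N) (Fin N) ℝ)
        + c • K.submatrix (blockIdx i) (blockIdx i)).det + c * (N:ℝ)^2 * ((N:ℝ) * ε) := by
    intro i
    exact TVGPAux.block_step hc (by positivity) (hKD_psd.submatrix _)
      ((TVGPAux.posSemidef_of_real h_symm h_psd).submatrix _) (hentry i)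
  -- put everything together
  have hlog1 : Real.log Mfull.det
      ≤ ∑ i : Fin m, Real.log ((1 : Matrix (Fin N) (Fin N) ℝ)
          + c • KD.submatrix (blockIdx i) (blockIdx i)).det := by
    have hprodpos : ∀ i ∈ Finset.univ (α := Fin m),
        ((1 : Matrix (Fin N) (Fin N) ℝ)
          + c • KD.submatrix (blockIdx i) (blockIdx i)).det ≠ 0 :=
      fun i _ => (hApd i).det_pos.ne'
    calc Real.log Mfull.det
        ≤ Real.log (∏ i : Fin m, ((1 : Matrix (Fin N) (Fin N) ℝ)
            + c • KD.submatrix (blockIdx i) (blockIdx i)).det) :=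
          Real.log_le_log hMfull_pd.det_pos hdet_le
      _ = ∑ i : Fin m, Real.log ((1 : Matrix (Fin N) (Fin N) ℝ)
            + c • KD.submatrix (blockIdx i) (blockIdx i)).det :=
          Real.log_prod hprodpos
  have hlog2 : (∑ i : Fin m, Real.log ((1 : Matrix (Fin N) (Fin N) ℝ)
        + c • KD.submatrix (blockIdx i) (blockIdx i)).det)
      ≤ (∑ i : Fin m, Real.log ((1 : Matrix (Fin N) (Fin N) ℝ)
        + c • K.submatrix (blockIdx i) (blockIdx i)).det)
        + (m : ℝ) * (c * (N:ℝ)^2 * ((N:ℝ) * ε)) := by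
    calc (∑ i : Fin m, Real.log ((1 : Matrix (Fin N) (Fin N) ℝ)
        + c • KD.submatrix (blockIdx i) (blockIdx i)).det)
        ≤ ∑ i : Fin m, (Real.log ((1 : Matrix (Fin N) (Fin N) ℝ)
            + c • K.submatrix (blockIdx i) (blockIdx i)).det
            + c * (N:ℝ)^2 * ((N:ℝ) * ε)) :=
          Finset.sum_le_sum fun i _ => hstep i
      _ = _ := by
          rw [Finset.sum_add_distrib, Finset.sum_const, Finset.card_univ, Fintype.card_fin,
            nsmul_eq_mul]
  have hfinal := hlog1.trans hlog2
  have hgoal_eq : ∀ i : Fin m,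
      ((1 : Matrix (Fin N) (Fin N) ℝ) + c • K.submatrix (blockIdx i) (blockIdx i))
        = (1 + (σ ^ 2)⁻¹ • (Matrix.of fun a b : Fin N => K (blockIdx i a) (blockIdx i b))) :=
    fun i => rfl
  calc Real.log (1 + (σ ^ 2)⁻¹ • (Matrix.of fun i j => K i j * D i j)).det
      = Real.log Mfull.det := rfl
    _ ≤ (∑ i : Fin m, Real.log ((1 : Matrix (Fin N) (Fin N) ℝ)
          + c • K.submatrix (blockIdx i) (blockIdx i)).det)
          + (m : ℝ) * (c * (N:ℝ)^2 * ((N:ℝ) * ε)) := hfinal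
    _ = (∑ i : Fin m,
          Real.log (1 + (σ ^ 2)⁻¹ •
            (Matrix.of fun a b : Fin N => K (blockIdx i a) (blockIdx i b))).det)
          + m * (σ ^ 2)⁻¹ * N ^ 3 * ε := by
        rw [show (m : ℝ) * (c * (N:ℝ)^2 * ((N:ℝ) * ε)) = m * (σ ^ 2)⁻¹ * (N:ℝ) ^ 3 * ε from by
          rw [hc_def]; ring]
        congr 1
end

section
/- Let N ≥ 1 be an integer and ε ∈ [0,1]. Let k ∈ ℝ^N have all entries in [0,1], and let d ∈ ℝ^N be the vector with entries d_i = (1−ε)^{(N+1−i)/2}. Then ∑_{i=1}^N (k_i·d_i − k_i)² ≤ N³ε². -/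
open scoped BigOperators

/-- Bound on `‖k ∘ d - k‖₂²` where `d_i = (1-ε)^((N+1-i)/2)` is the temporal discount
vector and the entries of `k` lie in `[0,1]`: `∑ᵢ (kᵢdᵢ - kᵢ)² ≤ N³ε²`. -/
theorem discounted_kernel_vector_dev_le
    (N : ℕ) (hN : 1 ≤ N) (ε : ℝ) (hε0 : 0 ≤ ε) (hε1 : ε ≤ 1)
    (k : Fin N → ℝ) (hk : ∀ i, k i ∈ Set.Icc (0 : ℝ) 1)
    (d : Fin N → ℝ)
    (hd : ∀ i : Fin N, d i = (1 - ε) ^ (((N : ℝ) + 1 - ((i : ℕ) + 1)) / 2)) :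
    ∑ i, (k i * d i - k i) ^ 2 ≤ N ^ 3 * ε ^ 2 := by
  have hb0 : (0:ℝ) ≤ 1 - ε := by linarith
  have hb1 : (1:ℝ) - ε ≤ 1 := by linarith
  have hNε : (0:ℝ) ≤ (N:ℝ) * ε := by positivity
  have key : ∀ i : Fin N, (k i * d i - k i) ^ 2 ≤ ((N:ℝ) * ε) ^ 2 := by
    intro i
    set e : ℝ := ((N : ℝ) + 1 - ((i : ℕ) + 1)) / 2 with he
    have hiN : ((i : ℕ) : ℝ) ≤ (N : ℝ) - 1 := by
      have h1 : ((i : ℕ) : ℝ) < (N : ℝ) := by exact_mod_cast i.2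
      have h2 : ((i : ℕ) : ℝ) + 1 ≤ (N : ℝ) := by
        exact_mod_cast Nat.succ_le_of_lt i.2
      linarith
    have he_pos : (0:ℝ) < e := by
      rw [he]; linarith
    have heN : e ≤ (N : ℝ) := by
      have hN1 : (1:ℝ) ≤ (N:ℝ) := by exact_mod_cast hN
      rw [he]
      have : (0:ℝ) ≤ ((i:ℕ):ℝ) := Nat.cast_nonneg _
      linarith
    have hd1 : d i ≤ 1 := by
      rw [hd i]
      exact Real.rpow_le_one hb0 hb1 he_pos.le
    have hd_lb : 1 - (N:ℝ) * ε ≤ d i := by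
      rcases lt_or_eq_of_le hε1 with h | h
      · have hpos : (0:ℝ) < 1 - ε := by linarith
        have h1 : (1 - ε) ^ ((N:ℝ)) ≤ (1 - ε) ^ e :=
          Real.rpow_le_rpow_of_exponent_ge hpos hb1 heN
        have h2 : (1 - ε) ^ ((N:ℝ)) = (1 - ε) ^ N := Real.rpow_natCast _ N
        have h3 : 1 + (N:ℝ) * (-ε) ≤ (1 + (-ε)) ^ N :=
          one_add_mul_le_pow (by linarith : (-2:ℝ) ≤ -ε) N
        rw [hd i]
        have : (1 + (-ε)) = (1 - ε) := by ring
        rw [this] at h3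
        rw [← he]
        nlinarith [h1, h2.symm ▸ h1]
      · have hNR : (1:ℝ) ≤ (N:ℝ) := by exact_mod_cast hN
        rw [hd i, ← he, ← h]
        simp only [sub_self]
        rw [Real.zero_rpow he_pos.ne']
        nlinarith
    obtain ⟨hk0, hk1⟩ := hk i
    have habs : |k i * d i - k i| ≤ (N:ℝ) * ε := by
      rw [abs_le]
      constructor <;> nlinarith [mul_nonneg hk0 (sub_nonneg.2 hd1)]
    calc (k i * d i - k i) ^ 2 = |k i * d i - k i| ^ 2 := (sq_abs _).symm
      _ ≤ ((N:ℝ) * ε) ^ 2 := by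
          exact pow_le_pow_left₀ (abs_nonneg _) habs 2
  calc ∑ i, (k i * d i - k i) ^ 2 ≤ ∑ _i : Fin N, ((N:ℝ) * ε) ^ 2 :=
        Finset.sum_le_sum fun i _ => key i
    _ = (N:ℝ) * ((N:ℝ) * ε) ^ 2 := by
        rw [Finset.sum_const, Finset.card_univ, Fintype.card_fin]; ring
    _ = (N:ℝ) ^ 3 * ε ^ 2 := by ring
end

section
/- Let D ⊆ ℝ^d be a convex set, let f, g : ℝ^d → ℝ be twice continuously differentiable, and let M > 0 be such that the operator norm of the Hessian of f and of the Hessian of g is at most M at every point of D. Let ε ∈ (0,1], and define h = √(1−ε)·f + √ε·g. Suppose x ∈ D satisfies ∇f(x) = 0 and ∇g(x) ≠ 0, set v = ∇g(x)/‖∇g(x)‖₂ and δ = √ε·‖∇g(x)‖₂/(2M), and suppose x + δv ∈ D. Then h(x + δv) − h(x) ≥ ε·‖∇g(x)‖₂²/(4M). -/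
open Set

lemma taylor_quad {E : Type*} [NormedAddCommGroup E] [NormedSpace ℝ E]
    {D : Set E} (hD : Convex ℝ D) {φ : E → ℝ} (hφ : ContDiff ℝ 2 φ)
    {M : ℝ} (hφM : ∀ y ∈ D, ‖fderiv ℝ (fderiv ℝ φ) y‖ ≤ M)
    {x : E} (hx : x ∈ D) {u : E} (hxu : x + u ∈ D) :
    |φ (x + u) - φ x - fderiv ℝ φ x u| ≤ M * ‖u‖ ^ 2 / 2 := by
  set ψ : ℝ → ℝ := fun t => φ (x + t • u) with hψdef
  have hL : ∀ t : ℝ, HasDerivAt (fun t : ℝ => x + t • u) u t := by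
    intro t
    simpa using ((hasDerivAt_id t).smul_const u).const_add x
  have hmem : ∀ t ∈ Icc (0:ℝ) 1, x + t • u ∈ D := by
    intro t ht
    have := hD.add_smul_sub_mem hx hxu ht
    simpa using this
  have hφd : Differentiable ℝ φ := hφ.differentiable (by norm_num)
  have hφd2 : Differentiable ℝ (fderiv ℝ φ) :=
    (hφ.fderiv_right (m := 1) one_add_one_eq_two.le).differentiable (by norm_num)
  have hψ' : ∀ t : ℝ, HasDerivAt ψ (fderiv ℝ φ (x + t • u) u) t := by
    intro t
    exact (hφd (x + t • u)).hasFDerivAt.comp_hasDerivAt t (hL t)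
  have hd1 : deriv ψ = fun t => fderiv ℝ φ (x + t • u) u := by
    funext t; exact (hψ' t).deriv
  have hψ'' : ∀ t : ℝ, HasDerivAt (deriv ψ)
      ((fderiv ℝ (fderiv ℝ φ) (x + t • u) u) u) t := by
    intro t
    rw [hd1]
    have h1 : HasDerivAt (fun t : ℝ => fderiv ℝ φ (x + t • u))
        (fderiv ℝ (fderiv ℝ φ) (x + t • u) u) t :=
      (hφd2 (x + t • u)).hasFDerivAt.comp_hasDerivAt t (hL t)
    have h2 := (ContinuousLinearMap.apply ℝ ℝ u).hasFDerivAt.comp_hasDerivAt t h1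
    exact h2
  have hψc : ContDiff ℝ 2 ψ := by
    apply hφ.comp
    exact contDiff_const.add (contDiff_id.smul contDiff_const)
  have hbound : ∀ t ∈ Icc (0:ℝ) 1, |deriv (deriv ψ) t| ≤ M * ‖u‖ ^ 2 := by
    intro t ht
    rw [(hψ'' t).deriv]
    calc |(fderiv ℝ (fderiv ℝ φ) (x + t • u) u) u|
        ≤ ‖fderiv ℝ (fderiv ℝ φ) (x + t • u) u‖ * ‖u‖ := by
          exact (fderiv ℝ (fderiv ℝ φ) (x + t • u) u).le_opNorm u
      _ ≤ (‖fderiv ℝ (fderiv ℝ φ) (x + t • u)‖ * ‖u‖) * ‖u‖ := by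
          gcongr
          exact (fderiv ℝ (fderiv ℝ φ) (x + t • u)).le_opNorm u
      _ ≤ (M * ‖u‖) * ‖u‖ := by
          gcongr
          exact hφM _ (hmem t ht)
      _ = M * ‖u‖ ^ 2 := by ring
  -- apply Taylor's theorem on [0,1]
  have hone : (0:ℝ) < 1 := one_pos
  have hud : UniqueDiffOn ℝ (Icc (0:ℝ) 1) := uniqueDiffOn_Icc hone
  have heq1 : EqOn (iteratedDerivWithin 1 ψ (Icc (0:ℝ) 1)) (deriv ψ) (Icc (0:ℝ) 1) := by
    intro y hy
    rw [iteratedDerivWithin_one]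
    exact ((hψ' y).differentiableAt).derivWithin (hud y hy)
  have hcont : ContDiffOn ℝ 1 ψ (Icc (0:ℝ) 1) := (hψc.of_le one_le_two).contDiffOn
  have hdiff : DifferentiableOn ℝ (iteratedDerivWithin 1 ψ (Icc (0:ℝ) 1)) (Ioo (0:ℝ) 1) := by
    apply DifferentiableOn.congr (f := deriv ψ)
    · intro y _; exact (hψ'' y).differentiableAt.differentiableWithinAt
    · exact fun y hy => heq1 (Ioo_subset_Icc_self hy)
  obtain ⟨x', hx', htay⟩ := taylor_mean_remainder_lagrange (n := 1) hone.ne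
    (by rw [uIcc_of_le hone.le]; exact_mod_cast hcont)
    (by rw [uIcc_of_le hone.le, uIoo_of_le hone.le]; exact hdiff)
  rw [uIoo_of_le hone.le] at hx'
  rw [uIcc_of_le hone.le] at htay
  have hx'I : x' ∈ Icc (0:ℝ) 1 := Ioo_subset_Icc_self hx'
  have hd2 : iteratedDerivWithin 2 ψ (Icc (0:ℝ) 1) x' = deriv (deriv ψ) x' := by
    rw [show (2:ℕ) = 1 + 1 from rfl, iteratedDerivWithin_succ]
    rw [derivWithin_congr heq1 (heq1 hx'I)]
    exact ((hψ'' x').differentiableAt).derivWithin (hud x' hx'I)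
  have htv : taylorWithinEval ψ 1 (Icc (0:ℝ) 1) 0 1 = ψ 0 + deriv ψ 0 := by
    rw [show (1:ℕ) = 0 + 1 from rfl, taylorWithinEval_succ, taylor_within_zero_eval]
    have h0 : (0:ℝ) ∈ Icc (0:ℝ) 1 := ⟨le_refl 0, zero_le_one⟩
    rw [iteratedDerivWithin_one]
    rw [((hψ' 0).differentiableAt).derivWithin (hud 0 h0)]
    norm_num
  rw [htv, hd2] at htay
  have hkey : ψ 1 - ψ 0 - deriv ψ 0 = deriv (deriv ψ) x' / 2 := by
    rw [sub_sub, htay]; norm_num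
  have hψ1 : ψ 1 = φ (x + u) := by simp [hψdef]
  have hψ0 : ψ 0 = φ x := by simp [hψdef]
  have hdψ0 : deriv ψ 0 = fderiv ℝ φ x u := by rw [hd1]; simp
  rw [← hψ1, ← hψ0, ← hdψ0, hkey]
  rw [abs_div]
  have := hbound x' hx'I
  rw [abs_of_pos (show (0:ℝ) < 2 by norm_num)]
  linarith


lemma grad_apply {E : Type*} [NormedAddCommGroup E] [InnerProductSpace ℝ E] [CompleteSpace E]
    (φ : E → ℝ) (x u : E) :
    fderiv ℝ φ x u = @inner ℝ _ _ (gradient φ x) u := by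
  rw [gradient, InnerProductSpace.toDual_symm_apply]


/-- Second-order Taylor estimate at the core of the regret lower bound: with
`h = √(1-ε)f + √ε·g`, `∇f(x) = 0`, Hessians bounded by `M` on the convex set `D`, and the
step `δ = √ε‖∇g(x)‖/(2M)` in the direction `v = ∇g(x)/‖∇g(x)‖`, we have
`h(x + δv) - h(x) ≥ ε‖∇g(x)‖²/(4M)`. -/
theorem taylor_step_gain
    (d : ℕ) (D : Set (EuclideanSpace ℝ (Fin d))) (hD : Convex ℝ D)
    (f g : EuclideanSpace ℝ (Fin d) → ℝ)
    (hf : ContDiff ℝ 2 f) (hg : ContDiff ℝ 2 g)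
    (M : ℝ) (hM : 0 < M)
    (hfM : ∀ y ∈ D, ‖fderiv ℝ (fderiv ℝ f) y‖ ≤ M)
    (hgM : ∀ y ∈ D, ‖fderiv ℝ (fderiv ℝ g) y‖ ≤ M)
    (ε : ℝ) (hε0 : 0 < ε) (hε1 : ε ≤ 1)
    (h : EuclideanSpace ℝ (Fin d) → ℝ)
    (hh : ∀ y, h y = Real.sqrt (1 - ε) * f y + Real.sqrt ε * g y)
    (x : EuclideanSpace ℝ (Fin d)) (hx : x ∈ D)
    (hfx : gradient f x = 0) (hgx : gradient g x ≠ 0)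
    (v : EuclideanSpace ℝ (Fin d)) (hv : v = ‖gradient g x‖⁻¹ • gradient g x)
    (δ : ℝ) (hδ : δ = Real.sqrt ε * ‖gradient g x‖ / (2 * M))
    (hxδ : x + δ • v ∈ D) :
    h (x + δ • v) - h x ≥ ε * ‖gradient g x‖ ^ 2 / (4 * M) := by
  set G := ‖gradient g x‖ with hG
  have hGpos : 0 < G := norm_pos_iff.mpr hgx
  set s1 := Real.sqrt (1 - ε) with hs1
  set s2 := Real.sqrt ε with hs2
  have hs1nn : 0 ≤ s1 := Real.sqrt_nonneg _
  have hs2nn : 0 ≤ s2 := Real.sqrt_nonneg _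
  have hs1le : s1 ≤ 1 := by
    rw [hs1]; exact Real.sqrt_le_one.mpr (by linarith)
  have hs2le : s2 ≤ 1 := by
    rw [hs2]; exact Real.sqrt_le_one.mpr hε1
  have hs2sq : s2 ^ 2 = ε := Real.sq_sqrt hε0.le
  have hδnn : 0 ≤ δ := by
    rw [hδ]; positivity
  have hvnorm : ‖v‖ = 1 := by
    rw [hv, norm_smul, norm_inv, norm_norm, ← hG, inv_mul_cancel₀ hGpos.ne']
  have hunorm : ‖δ • v‖ = δ := by
    rw [norm_smul, hvnorm, mul_one, Real.norm_eq_abs, abs_of_nonneg hδnn]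
  have hfd : fderiv ℝ f x (δ • v) = 0 := by
    rw [grad_apply _ _ _, hfx, inner_zero_left]
  have hgd : fderiv ℝ g x (δ • v) = δ * G := by
    rw [grad_apply _ _ _, hv, real_inner_smul_right, real_inner_smul_right,
      real_inner_self_eq_norm_sq, ← hG]
    field_simp
  have hfq := taylor_quad hD hf hfM hx hxδ
  have hgq := taylor_quad hD hg hgM hx hxδ
  rw [hfd, hunorm] at hfq
  rw [hgd, hunorm] at hgq
  rw [sub_zero] at hfq
  have hfq1 : f (x + δ • v) - f x ≥ -(M * δ ^ 2 / 2) := by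
    have := abs_le.mp hfq; linarith [this.1]
  have hgq1 : g (x + δ • v) - g x ≥ δ * G - M * δ ^ 2 / 2 := by
    have := abs_le.mp hgq; linarith [this.1]
  have hhdiff : h (x + δ • v) - h x
      = s1 * (f (x + δ • v) - f x) + s2 * (g (x + δ • v) - g x) := by
    rw [hh, hh]; ring
  rw [hhdiff]
  have hA : (0:ℝ) ≤ M * δ ^ 2 / 2 := by positivity
  have hMδ2 : M * δ ^ 2 / 2 = ε * G ^ 2 / (8 * M) := by
    rw [hδ, ← hs2sq]; field_simp; ring
  have hδG : s2 * (δ * G) = ε * G ^ 2 / (2 * M) := by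
    rw [hδ, ← hs2sq]; field_simp
  have e1 : s1 * (M * δ ^ 2 / 2) ≤ M * δ ^ 2 / 2 := mul_le_of_le_one_left hA hs1le
  have e2 : s2 * (M * δ ^ 2 / 2) ≤ M * δ ^ 2 / 2 := mul_le_of_le_one_left hA hs2le
  have h1 : s1 * (f (x + δ • v) - f x) ≥ -(M * δ ^ 2 / 2) := by
    have h' := mul_le_mul_of_nonneg_left hfq1 hs1nn
    rw [mul_neg] at h'
    linarith
  have h2 : s2 * (g (x + δ • v) - g x) ≥ s2 * (δ * G) - M * δ ^ 2 / 2 := by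
    have h' := mul_le_mul_of_nonneg_left hgq1 hs2nn
    rw [mul_sub] at h'
    linarith
  rw [hδG] at h2
  rw [hMδ2] at h1 h2
  have hfinal : ε * G ^ 2 / (2 * M) - ε * G ^ 2 / (8 * M) - ε * G ^ 2 / (8 * M)
      = ε * G ^ 2 / (4 * M) := by
    field_simp
    ring
  linarith
end
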